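/- arXiv:1201.4670 — 6 statements merged into one kernel-verified Lean document; each statement's English description precedes it below -/
import Mathlib

section
/- Assume the family (r_j)_{j∈ℤ³} is independent, each with law ν, and that for some η > 0 and some 1 ≤ p < 3 one has Σ_{j ∈ ℤ³, j ≠ 0} ‖ν‖_{L^∞(W + B_η − j)}^{1/p} < ∞. Then E(X₁^p) < ∞, i.e. X₁ ∈ L^p(Ω). -/
open MeasureTheory ProbabilityTheory ENNReal Pointwise

noncomputable section

/-- `ℝ³` with the Euclidean norm. -/
abbrev E3 := EuclideanSpace ℝ (Fin 3)

/-- The lattice point `j ∈ ℤ³` viewed in `ℝ³`. -/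
def latt (j : Fin 3 → ℤ) : E3 := (EuclideanSpace.equiv (Fin 3) ℝ).symm (fun i => (j i : ℝ))

/-- The semi-open unit cube `W = [-1/2, 1/2)³`. -/
def Wcube : Set E3 := {x | ∀ i, -(1:ℝ)/2 ≤ x i ∧ x i < 1/2}

/-- The distance (in `[0,∞]`) from the perturbed lattice point `j + r_j(ω)` to its nearest
neighbor: `δ_j(ω) = inf_{k ≠ j} |j + r_j(ω) − k − r_k(ω)|`. -/
def nnd {Ω : Type*} (r : (Fin 3 → ℤ) → Ω → E3) (j : Fin 3 → ℤ) (ω : Ω) : ℝ≥0∞ :=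
  ⨅ k : {k : Fin 3 → ℤ // k ≠ j},
    edist (latt j + r j ω) (latt (k : Fin 3 → ℤ) + r (k : Fin 3 → ℤ) ω)

/-- `X₁(ω) = Σ_{j : j + r_j(ω) ∈ W} 1/δ_j(ω)` with values in `[0,∞]`. -/
def X1 {Ω : Type*} (r : (Fin 3 → ℤ) → Ω → E3) (ω : Ω) : ℝ≥0∞ :=
  ∑' j : Fin 3 → ℤ, Wcube.indicator (fun _ => (nnd r j ω)⁻¹) (latt j + r j ω)

/-- `‖ν‖_{L^∞(A)}`: the least `M ∈ [0,∞]` such that `ν(B) ≤ M·λ(B)` for every Borel `B ⊆ A`. -/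
def densBound (ν : Measure E3) (A : Set E3) : ℝ≥0∞ :=
  sInf {M : ℝ≥0∞ | ∀ B : Set E3, B ⊆ A → MeasurableSet B → ν B ≤ M * volume B}

namespace X1Aux
open Metric


lemma measurableSet_Wcube : MeasurableSet Wcube := by
  have h : Wcube = ⋂ i : Fin 3, (fun x : E3 => x i) ⁻¹' (Set.Ico (-(1:ℝ)/2) (1/2)) := by
    ext x; simp [Wcube, Set.mem_Ico]
  rw [h]
  exact MeasurableSet.iInter fun i =>
    ((EuclideanSpace.proj (𝕜 := ℝ) i).continuous.measurable) measurableSet_Ico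

lemma Wcube_subset_ball : Wcube ⊆ ball (0 : E3) 2 := by
  intro x hx
  rw [mem_ball_zero_iff, EuclideanSpace.norm_eq]
  have hb : ∀ i, ‖x i‖ ^ 2 ≤ 1 := by
    intro i
    have h1 : |x i| ≤ 1 := by
      have h := hx i
      rw [abs_le]
      constructor
      · linarith [h.1]
      · linarith [h.2]
    rw [Real.norm_eq_abs]
    nlinarith [abs_nonneg (x i)]
  have hsum : (∑ i, ‖x i‖ ^ 2) ≤ 3 := by
    calc (∑ i, ‖x i‖ ^ 2) ≤ ∑ _i : Fin 3, (1:ℝ) := Finset.sum_le_sum fun i _ => hb i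
    _ = 3 := by simp
  calc √(∑ i, ‖x i‖ ^ 2) ≤ √3 := Real.sqrt_le_sqrt hsum
  _ < 2 := by
      nlinarith [Real.sqrt_nonneg 3, Real.sq_sqrt (by norm_num : (0:ℝ) ≤ 3)]

lemma WB_subset_ball {η : ℝ} : Wcube + ball (0:E3) η ⊆ ball (0:E3) (2 + η) := by
  intro z hz
  rcases Set.mem_add.1 hz with ⟨w, hw, b, hb, rfl⟩
  rw [mem_ball_zero_iff]
  calc ‖w + b‖ ≤ ‖w‖ + ‖b‖ := norm_add_le _ _
  _ < 2 + η := by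
      have h1 := mem_ball_zero_iff.1 (Wcube_subset_ball hw)
      have h2 := mem_ball_zero_iff.1 hb
      linarith

lemma subset_WB {η : ℝ} (hη : 0 < η) : Wcube ⊆ Wcube + ball (0:E3) η := fun x hx =>
  Set.mem_add.2 ⟨x, hx, 0, mem_ball_self hη, add_zero x⟩

lemma isOpen_WB {η : ℝ} : IsOpen (Wcube + ball (0:E3) η) := isOpen_ball.add_left

lemma volume_WB_lt_top {η : ℝ} : volume (Wcube + ball (0:E3) η) < ⊤ :=
  lt_of_le_of_lt (measure_mono WB_subset_ball) measure_ball_lt_top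

lemma densBound_le {ν : Measure E3} {A B : Set E3} (hBA : B ⊆ A) (hB : MeasurableSet B)
    (hfin : volume B ≠ ⊤) (hd : densBound ν A ≠ ⊤) :
    ν B ≤ densBound ν A * volume B := by
  set S := {M : ℝ≥0∞ | ∀ B : Set E3, B ⊆ A → MeasurableSet B → ν B ≤ M * volume B} with hS
  have hne : S.Nonempty := by
    by_contra h
    rw [Set.not_nonempty_iff_eq_empty] at h
    apply hd
    rw [densBound, ← hS, h, sInf_empty]
  haveI : Nonempty S := hne.to_subtype
  calc ν B ≤ ⨅ M : S, (M : ℝ≥0∞) * volume B := le_iInf fun M => M.2 B hBA hB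
  _ = (⨅ M : S, (M : ℝ≥0∞)) * volume B :=
      (ENNReal.iInf_mul (fun h => absurd h hfin)).symm
  _ = densBound ν A * volume B := by rw [densBound, ← hS, sInf_eq_iInf']

lemma lintegral_densBound {ν : Measure E3} {A : Set E3} (hA : MeasurableSet A)
    (hAfin : volume A ≠ ⊤) (hd : densBound ν A ≠ ⊤) (f : E3 → ℝ≥0∞) :
    ∫⁻ x in A, f x ∂ν ≤ densBound ν A * ∫⁻ x, f x := by
  have hle : ν.restrict A ≤ (densBound ν A) • (volume.restrict A) := by
    refine Measure.le_iff.2 fun s hs => ?_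
    rw [Measure.restrict_apply hs, Measure.smul_apply, smul_eq_mul, Measure.restrict_apply hs]
    refine densBound_le Set.inter_subset_right (hs.inter hA) ?_ hd
    exact ((measure_mono Set.inter_subset_right).trans_lt hAfin.lt_top).ne
  calc ∫⁻ x in A, f x ∂ν ≤ ∫⁻ x, f x ∂((densBound ν A) • (volume.restrict A)) :=
        lintegral_mono' hle le_rfl
  _ = densBound ν A * ∫⁻ x in A, f x := lintegral_smul_measure _ _
  _ ≤ densBound ν A * ∫⁻ x, f x := by
      gcongr
      exact Measure.restrict_le_self

lemma iSup_rpow {α : Sort*} [Nonempty α] (f : α → ℝ≥0∞) {q : ℝ} (hq : 0 < q) :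
    (⨆ i, f i) ^ q = ⨆ i, f i ^ q := by
  apply le_antisymm
  · have h1 : (⨆ i, f i) ≤ (⨆ i, f i ^ q) ^ q⁻¹ := by
      refine iSup_le fun i => ?_
      rw [← ENNReal.rpow_rpow_inv hq.ne' (f i)]
      exact ENNReal.rpow_le_rpow (le_iSup (fun i => f i ^ q) i) (by positivity)
    calc (⨆ i, f i) ^ q ≤ ((⨆ i, f i ^ q) ^ q⁻¹) ^ q := ENNReal.rpow_le_rpow h1 hq.le
    _ = ⨆ i, f i ^ q := ENNReal.rpow_inv_rpow hq.ne' _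
  · exact iSup_le fun i => ENNReal.rpow_le_rpow (le_iSup f i) hq.le

/-- Minkowski's inequality for countable sums of `ℝ≥0∞`-valued functions. -/
lemma lintegral_tsum_rpow {Ω : Type*} [MeasurableSpace Ω] (P : Measure Ω)
    {κ : Type*} (e : ℕ ≃ κ) (f : κ → Ω → ℝ≥0∞) (hf : ∀ i, Measurable (f i))
    {p : ℝ} (hp : 1 ≤ p) :
    ∫⁻ ω, (∑' i, f i ω) ^ p ∂P ≤ (∑' i, (∫⁻ ω, f i ω ^ p ∂P) ^ (1/p)) ^ p := by
  have hp0 : (0:ℝ) < p := lt_of_lt_of_le one_pos hp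
  set R := ∑' i, (∫⁻ ω, f i ω ^ p ∂P) ^ (1/p) with hR
  set S : ℕ → Ω → ℝ≥0∞ := fun n ω => ∑ m ∈ Finset.range n, f (e m) ω with hSdef
  have hSmeas : ∀ n, Measurable (S n) := fun n =>
    Finset.measurable_sum _ fun m _ => hf (e m)
  have key : ∀ n, (∫⁻ ω, (S n ω) ^ p ∂P) ^ (1/p)
      ≤ ∑ m ∈ Finset.range n, (∫⁻ ω, f (e m) ω ^ p ∂P) ^ (1/p) := by
    intro n
    induction n with
    | zero =>
      have h1 : ∫⁻ ω, (S 0 ω) ^ p ∂P = 0 := by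
        simp [hSdef, ENNReal.zero_rpow_of_pos hp0]
      rw [h1, Finset.range_zero, Finset.sum_empty,
        ENNReal.zero_rpow_of_pos (by positivity : (0:ℝ) < 1/p)]
    | succ n ih =>
      have hadd := ENNReal.lintegral_Lp_add_le (μ := P)
        (hSmeas n).aemeasurable (hf (e n)).aemeasurable hp
      simp only [Pi.add_apply] at hadd
      rw [Finset.sum_range_succ]
      have hs : ∀ ω, S (n+1) ω = S n ω + f (e n) ω := by
        intro ω; rw [hSdef]; exact Finset.sum_range_succ _ n
      calc (∫⁻ ω, (S (n+1) ω) ^ p ∂P) ^ (1/p)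
          = (∫⁻ ω, (S n ω + f (e n) ω) ^ p ∂P) ^ (1/p) := by
            congr 1; exact lintegral_congr fun ω => by rw [hs ω]
      _ ≤ (∫⁻ ω, (S n ω) ^ p ∂P) ^ (1/p) + (∫⁻ ω, (f (e n) ω) ^ p ∂P) ^ (1/p) := hadd
      _ ≤ _ := add_le_add ih le_rfl
  have hmono : Monotone fun n => (fun ω => (S n ω) ^ p) := by
    intro a b hab ω
    exact ENNReal.rpow_le_rpow
      (Finset.sum_le_sum_of_subset (Finset.range_subset_range.2 hab)) hp0.le
  calc ∫⁻ ω, (∑' i, f i ω) ^ p ∂P = ∫⁻ ω, ⨆ n, (S n ω) ^ p ∂P := by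
        refine lintegral_congr fun ω => ?_
        rw [← Equiv.tsum_eq e (fun i => f i ω), ENNReal.tsum_eq_iSup_nat,
          iSup_rpow _ hp0]
  _ = ⨆ n, ∫⁻ ω, (S n ω) ^ p ∂P :=
      lintegral_iSup (fun n => (hSmeas n).pow_const p) hmono
  _ ≤ R ^ p := by
      refine iSup_le fun n => ?_
      have h1 : (∫⁻ ω, (S n ω) ^ p ∂P) ^ (1/p) ≤ R := by
        refine (key n).trans ?_
        calc ∑ m ∈ Finset.range n, (∫⁻ ω, f (e m) ω ^ p ∂P) ^ (1/p)
            ≤ ∑' m : ℕ, (∫⁻ ω, f (e m) ω ^ p ∂P) ^ (1/p) := ENNReal.sum_le_tsum _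
        _ = R := by rw [hR]; exact Equiv.tsum_eq e (fun i => (∫⁻ ω, f i ω ^ p ∂P) ^ (1/p))
      have h2 := ENNReal.rpow_le_rpow h1 hp0.le
      rwa [one_div, ENNReal.rpow_inv_rpow hp0.ne'] at h2

/-- Truncated inverse-power kernel. -/
def psi (η p : ℝ) (d : ℝ≥0∞) : ℝ≥0∞ := if d < ENNReal.ofReal η then d⁻¹ ^ p else 0

lemma measurable_psi (η p : ℝ) : Measurable (psi η p) := by
  refine Measurable.ite (measurableSet_lt measurable_id measurable_const) ?_ measurable_const
  exact measurable_inv.pow_const p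

lemma psi_le (η p : ℝ) (d : ℝ≥0∞) : psi η p d ≤ d⁻¹ ^ p := by
  rw [psi]; split_ifs <;> simp

/-- The constant `C = ∫_{B_η} |y|^{-p} dy`. -/
def Ceta (η p : ℝ) : ℝ≥0∞ := ∫⁻ y : E3, psi η p (edist 0 y)

lemma lintegral_psi_edist (η p : ℝ) (c : E3) :
    ∫⁻ y : E3, psi η p (edist c y) = Ceta η p := by
  have h1 : ∀ y : E3, edist c y = edist 0 (y - c) := by
    intro y
    have h := edist_sub_right c y c
    rw [sub_self] at h
    exact h.symm
  calc ∫⁻ y : E3, psi η p (edist c y) = ∫⁻ y : E3, psi η p (edist 0 (y - c)) :=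
        lintegral_congr fun y => by rw [h1]
  _ = ∫⁻ y : E3, psi η p (edist 0 y) := by
        have h := lintegral_add_right_eq_self (μ := (volume : Measure E3))
          (fun y => psi η p (edist 0 y)) (-c)
        simpa [sub_eq_add_neg] using h
  _ = Ceta η p := rfl

lemma Ceta_lt_top {η p : ℝ} (hη : 0 < η) (hp0 : 0 < p) (hp3 : p < 3) : Ceta η p < ⊤ := by
  classical
  set F : E3 → ℝ≥0∞ := fun y => psi η p (edist 0 y) with hF
  set rad : ℕ → ℝ := fun n => η * (1/2) ^ n with hrad
  have hradpos : ∀ n, 0 < rad n := fun n => by rw [hrad]; positivity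
  set A : ℕ → Set E3 := fun n => {y : E3 | rad (n+1) ≤ ‖y‖} ∩ ball (0:E3) (rad n) with hA
  have hcond : ∀ y : E3, edist 0 y < ENNReal.ofReal η ↔ ‖y‖ < η := by
    intro y
    rw [edist_dist, ENNReal.ofReal_lt_ofReal_iff hη, dist_zero_left]
  have hedist : ∀ y : E3, edist 0 y = ENNReal.ofReal ‖y‖ := by
    intro y; rw [edist_dist, dist_zero_left]
  have hae : F =ᵐ[volume] (ball (0:E3) η \ {0}).indicator F := by
    have hnull : volume ({(0:E3)} : Set E3) = 0 := measure_singleton 0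
    refine Filter.eventuallyEq_of_mem (s := {(0:E3)}ᶜ) ?_ ?_
    · rw [mem_ae_iff]; simpa using hnull
    · intro y hy
      have hy0 : y ≠ 0 := by simpa using hy
      by_cases hyb : y ∈ ball (0:E3) η
      · have hmem : y ∈ ball (0:E3) η \ {0} := ⟨hyb, by simpa using hy0⟩
        rw [Set.indicator_of_mem hmem]
      · have hz : F y = 0 := by
          rw [hF]; simp only [psi]
          rw [if_neg]
          intro hlt
          exact hyb (by rw [mem_ball_zero_iff]; exact (hcond y).1 hlt)
        rw [hz, Set.indicator_of_notMem (fun hmem => hyb hmem.1)]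
  have hcover : (ball (0:E3) η \ {0}) ⊆ ⋃ n, A n := by
    intro y hy
    have hy0 : (0:ℝ) < ‖y‖ := by
      have : y ≠ 0 := by simpa using hy.2
      exact norm_pos_iff.2 this
    have hyη : ‖y‖ < η := mem_ball_zero_iff.1 hy.1
    have hex : ∃ m : ℕ, rad (m+1) ≤ ‖y‖ := by
      obtain ⟨m, hm⟩ := exists_pow_lt_of_lt_one (x := ‖y‖ / η) (by positivity)
        (by norm_num : (1:ℝ)/2 < 1)
      refine ⟨m, ?_⟩
      have h2 : η * (1/2) ^ m < ‖y‖ := by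
        rw [lt_div_iff₀ hη] at hm
        linarith [hm]
      have hpow : ((1:ℝ)/2) ^ (m+1) ≤ (1/2) ^ m :=
        pow_le_pow_of_le_one (by norm_num) (by norm_num) (Nat.le_succ m)
      have h3 : rad (m+1) ≤ η * (1/2) ^ m := by
        show η * (1/2) ^ (m+1) ≤ η * (1/2) ^ m
        exact mul_le_mul_of_nonneg_left hpow hη.le
      linarith
    have h2 : ‖y‖ < rad (Nat.find hex) := by
      cases hfind : Nat.find hex with
      | zero => simpa [hrad] using hyη
      | succ m =>
        have hlt : m < Nat.find hex := hfind ▸ m.lt_succ_self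
        have hmin := Nat.find_min hex hlt
        push_neg at hmin
        exact hmin
    exact Set.mem_iUnion.2 ⟨Nat.find hex, ⟨Nat.find_spec hex, mem_ball_zero_iff.2 h2⟩⟩
  set bnd : ℕ → ℝ≥0∞ := fun n => ENNReal.ofReal ((rad (n+1))⁻¹ ^ p) with hbnd
  have hterm : ∀ n, ∫⁻ y in A n, F y ≤ bnd n * volume (ball (0:E3) (rad n)) := by
    intro n
    have hle : ∫⁻ y in A n, F y ≤ ∫⁻ _y in A n, bnd n := by
      refine setLIntegral_mono measurable_const fun y hy => ?_
      have h3 : ENNReal.ofReal (rad (n+1)) ≤ edist 0 y := by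
        rw [hedist]; exact ENNReal.ofReal_le_ofReal hy.1
      calc F y ≤ (edist 0 y)⁻¹ ^ p := psi_le η p _
      _ ≤ (ENNReal.ofReal (rad (n+1)))⁻¹ ^ p :=
          ENNReal.rpow_le_rpow (ENNReal.inv_le_inv.2 h3) hp0.le
      _ = bnd n := by
          rw [← ENNReal.ofReal_inv_of_pos (hradpos (n+1)),
            ENNReal.ofReal_rpow_of_pos (by positivity)]
    refine hle.trans ?_
    rw [setLIntegral_const]
    exact mul_le_mul_right (measure_mono Set.inter_subset_right) _
  have hvol : ∀ n, volume (ball (0:E3) (rad n))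
      = ENNReal.ofReal (rad n ^ 3) * volume (ball (0:E3) 1) := by
    intro n
    have h := Measure.addHaar_ball (volume : Measure E3) 0 (hradpos n).le
    rwa [show Module.finrank ℝ E3 = 3 from finrank_euclideanSpace_fin] at h
  set q : ℝ := (2:ℝ) ^ p / 8 with hq
  have hq0 : 0 ≤ q := by rw [hq]; positivity
  have hq1 : q < 1 := by
    rw [hq, div_lt_one (by norm_num : (0:ℝ) < 8)]
    calc (2:ℝ) ^ p < 2 ^ (3:ℝ) := by
          exact (Real.rpow_lt_rpow_left_iff (by norm_num : (1:ℝ) < 2)).2 hp3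
    _ = 8 := by
        rw [show (3:ℝ) = ((3:ℕ):ℝ) by norm_num, Real.rpow_natCast]; norm_num
  set g : ℕ → ℝ := fun n => (rad (n+1))⁻¹ ^ p * rad n ^ 3 with hg
  have hgpos : ∀ n, 0 ≤ g n := fun n => by
    rw [hg]
    have := hradpos n
    have := hradpos (n+1)
    positivity
  have hgrec : ∀ n, g (n+1) = q * g n := by
    intro n
    have e1 : rad (n+2) = rad (n+1) * (1/2) := by
      show η * (1/2) ^ (n+2) = η * (1/2) ^ (n+1) * (1/2)
      rw [pow_succ]; ring
    have e2 : rad (n+1) = rad n * (1/2) := by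
      show η * (1/2) ^ (n+1) = η * (1/2) ^ n * (1/2)
      rw [pow_succ]; ring
    have e3 : (rad (n+2))⁻¹ = (rad (n+1))⁻¹ * 2 := by rw [e1, mul_inv]; norm_num
    have e4 : (rad (n+2))⁻¹ ^ p = (rad (n+1))⁻¹ ^ p * 2 ^ p := by
      rw [e3, Real.mul_rpow (inv_nonneg.2 (hradpos (n+1)).le) (by norm_num)]
    have e5 : rad (n+1) ^ 3 = rad n ^ 3 * (1/8) := by rw [e2]; ring
    show (rad (n+1+1))⁻¹ ^ p * rad (n+1) ^ 3 = (2:ℝ) ^ p / 8 * ((rad (n+1))⁻¹ ^ p * rad n ^ 3)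
    rw [show n+1+1 = n+2 from rfl, e4, e5]
    ring
  have hgeom : ∀ n, g n = g 0 * q ^ n := by
    intro n
    induction n with
    | zero => simp
    | succ n ih => rw [hgrec n, ih, pow_succ]; ring
  set qe : ℝ≥0∞ := ENNReal.ofReal q with hqe
  have hsum_lt : ∑' n, ENNReal.ofReal (g n) * volume (ball (0:E3) 1) < ⊤ := by
    have hterm_eq : ∀ n, ENNReal.ofReal (g n) * volume (ball (0:E3) 1)
        = (ENNReal.ofReal (g 0) * volume (ball (0:E3) 1)) * qe ^ n := by
      intro n
      rw [hgeom n, ENNReal.ofReal_mul (hgpos 0), ENNReal.ofReal_pow hq0, ← hqe]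
      ring
    rw [tsum_congr hterm_eq, ENNReal.tsum_mul_left, ENNReal.tsum_geometric]
    have h1 : (1 - qe)⁻¹ < ⊤ := by
      rw [ENNReal.inv_lt_top]
      rw [tsub_pos_iff_lt]
      exact ENNReal.ofReal_lt_one.2 hq1
    exact ENNReal.mul_lt_top
      (ENNReal.mul_lt_top ENNReal.ofReal_lt_top measure_ball_lt_top) h1
  calc Ceta η p = ∫⁻ y, ((ball (0:E3) η \ {0}).indicator F) y := lintegral_congr_ae hae
  _ = ∫⁻ y in (ball (0:E3) η \ {0}), F y :=
      lintegral_indicator (measurableSet_ball.diff (measurableSet_singleton 0)) F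
  _ ≤ ∫⁻ y in ⋃ n, A n, F y := lintegral_mono_set hcover
  _ ≤ ∑' n, ∫⁻ y in A n, F y := lintegral_iUnion_le _ _
  _ ≤ ∑' n, bnd n * volume (ball (0:E3) (rad n)) := ENNReal.tsum_le_tsum hterm
  _ = ∑' n, ENNReal.ofReal (g n) * volume (ball (0:E3) 1) := by
      refine tsum_congr fun n => ?_
      rw [hvol n]
      show ENNReal.ofReal ((rad (n+1))⁻¹ ^ p) * (ENNReal.ofReal (rad n ^ 3) * ℙ (ball (0:E3) 1))
        = ENNReal.ofReal ((rad (n+1))⁻¹ ^ p * rad n ^ 3) * ℙ (ball (0:E3) 1)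
      rw [ENNReal.ofReal_mul (Real.rpow_nonneg (inv_nonneg.2 (hradpos (n+1)).le) p), mul_assoc]
  _ < ⊤ := hsum_lt

def Wset (j : Fin 3 → ℤ) : Set E3 := {x : E3 | latt j + x ∈ Wcube}

def Aset (η : ℝ) (k : Fin 3 → ℤ) : Set E3 :=
  (fun x : E3 => x + latt k) ⁻¹' (Wcube + ball (0:E3) η)

lemma measurableSet_Wset (j : Fin 3 → ℤ) : MeasurableSet (Wset j) := by
  have h : Wset j = (fun x : E3 => latt j + x) ⁻¹' Wcube := rfl
  rw [h]
  exact measurableSet_Wcube.preimage (measurable_id.const_add _)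

lemma measurableSet_Aset (η : ℝ) (k : Fin 3 → ℤ) : MeasurableSet (Aset η k) :=
  (isOpen_WB.preimage (continuous_add_right _)).measurableSet

lemma volume_Aset (η : ℝ) (k : Fin 3 → ℤ) :
    volume (Aset η k) = volume (Wcube + ball (0:E3) η) :=
  measure_preimage_add_right volume (latt k) _

lemma volume_Aset_ne_top (η : ℝ) (k : Fin 3 → ℤ) : volume (Aset η k) ≠ ⊤ := by
  rw [volume_Aset]; exact volume_WB_lt_top.ne

lemma Wset_subset_Aset {η : ℝ} (hη : 0 < η) (j : Fin 3 → ℤ) : Wset j ⊆ Aset η j := by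
  intro x hx
  have h1 : latt j + x ∈ Wcube := hx
  show x + latt j ∈ Wcube + ball (0:E3) η
  rw [add_comm x (latt j)]
  exact subset_WB hη h1

lemma nnd_bound {Ω : Type*} (r : (Fin 3 → ℤ) → Ω → E3) (j : Fin 3 → ℤ) (ω : Ω)
    {η p : ℝ} (hp0 : 0 < p) :
    (nnd r j ω)⁻¹ ^ p ≤ (ENNReal.ofReal η)⁻¹ ^ p
      + ∑' k : {k : Fin 3 → ℤ // k ≠ j},
          psi η p (edist (latt j + r j ω) (latt (k:Fin 3 → ℤ) + r (k:Fin 3 → ℤ) ω)) := by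
  haveI : Nonempty {k : Fin 3 → ℤ // k ≠ j} := by
    obtain ⟨k, hk⟩ := exists_ne j
    exact ⟨⟨k, hk⟩⟩
  rw [nnd, ENNReal.inv_iInf, iSup_rpow _ hp0]
  refine iSup_le fun k => ?_
  by_cases hd : edist (latt j + r j ω) (latt (k:Fin 3 → ℤ) + r (k:Fin 3 → ℤ) ω)
      < ENNReal.ofReal η
  · have h1 : (edist (latt j + r j ω) (latt (k:Fin 3 → ℤ) + r (k:Fin 3 → ℤ) ω))⁻¹ ^ p
        = psi η p (edist (latt j + r j ω) (latt (k:Fin 3 → ℤ) + r (k:Fin 3 → ℤ) ω)) := by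
      rw [psi, if_pos hd]
    rw [h1]
    exact le_trans (ENNReal.le_tsum k) le_add_self
  · push_neg at hd
    have h1 := ENNReal.inv_le_inv.2 hd
    exact le_trans (ENNReal.rpow_le_rpow h1 hp0.le) le_self_add

lemma pair_est₁ {ν : Measure E3} [IsProbabilityMeasure ν] {η p : ℝ} (hη : 0 < η) (hp0 : 0 < p)
    (j k : Fin 3 → ℤ) (hd : densBound ν (Aset η k) ≠ ⊤) :
    ∫⁻ z : E3 × E3, (Wset j).indicator (fun _ => (1:ℝ≥0∞)) z.1
        * psi η p (edist (latt j + z.1) (latt k + z.2)) ∂(ν.prod ν)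
      ≤ ν (Wset j) * (densBound ν (Aset η k) * Ceta η p) := by
  set M := densBound ν (Aset η k) with hM
  have hgmeas : Measurable fun z : E3 × E3 => (Wset j).indicator (fun _ => (1:ℝ≥0∞)) z.1
      * psi η p (edist (latt j + z.1) (latt k + z.2)) :=
    ((measurable_const.indicator (measurableSet_Wset j)).comp measurable_fst).mul
      ((measurable_psi η p).comp
        (Measurable.edist (measurable_fst.const_add _) (measurable_snd.const_add _)))
  rw [MeasureTheory.lintegral_prod _ hgmeas.aemeasurable]
  have hinner : ∀ x : E3, ∫⁻ y, (Wset j).indicator (fun _ => (1:ℝ≥0∞)) x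
      * psi η p (edist (latt j + x) (latt k + y)) ∂ν
      ≤ (Wset j).indicator (fun _ => M * Ceta η p) x := by
    intro x
    by_cases hx : x ∈ Wset j
    · rw [Set.indicator_of_mem hx, Set.indicator_of_mem hx]
      simp only [one_mul]
      set c := latt j + x - latt k with hc
      have hrw : ∀ y : E3, edist (latt j + x) (latt k + y) = edist c y := by
        intro y
        have h1 : latt j + x = c + latt k := by rw [hc]; abel
        have h2 : latt k + y = y + latt k := add_comm _ _
        rw [h1, h2, edist_add_right]
      have hsupp : ∀ y : E3, y ∉ Aset η k → psi η p (edist c y) = 0 := by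
        intro y hyA
        rw [psi, if_neg]
        intro hlt
        apply hyA
        have hdist : dist c y < η := by
          rw [edist_dist] at hlt
          exact (ENNReal.ofReal_lt_ofReal_iff hη).1 hlt
        show y + latt k ∈ Wcube + ball (0:E3) η
        refine Set.mem_add.2 ⟨latt j + x, hx, y - c, ?_, ?_⟩
        · rw [mem_ball_zero_iff, ← dist_eq_norm, dist_comm]
          exact hdist
        · rw [hc]; abel
      have heq : (fun y => psi η p (edist c y))
          = (Aset η k).indicator (fun y => psi η p (edist c y)) := by
        funext y
        by_cases hyA : y ∈ Aset η k
        · rw [Set.indicator_of_mem hyA]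
        · rw [Set.indicator_of_notMem hyA, hsupp y hyA]
      calc ∫⁻ y, psi η p (edist (latt j + x) (latt k + y)) ∂ν
          = ∫⁻ y, psi η p (edist c y) ∂ν := lintegral_congr fun y => by rw [hrw]
      _ = ∫⁻ y in Aset η k, psi η p (edist c y) ∂ν := by
          conv_lhs => rw [heq]
          exact lintegral_indicator (measurableSet_Aset η k) _
      _ ≤ M * ∫⁻ y, psi η p (edist c y) :=
          lintegral_densBound (measurableSet_Aset η k) (volume_Aset_ne_top η k) hd _
      _ = M * Ceta η p := by rw [lintegral_psi_edist]
    · rw [Set.indicator_of_notMem hx, Set.indicator_of_notMem hx]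
      simp
  calc ∫⁻ x, ∫⁻ y, (Wset j).indicator (fun _ => (1:ℝ≥0∞)) x
        * psi η p (edist (latt j + x) (latt k + y)) ∂ν ∂ν
      ≤ ∫⁻ x, (Wset j).indicator (fun _ => M * Ceta η p) x ∂ν := lintegral_mono hinner
  _ = (M * Ceta η p) * ν (Wset j) := lintegral_indicator_const (measurableSet_Wset j) _
  _ = ν (Wset j) * (M * Ceta η p) := mul_comm _ _

lemma pair_est₂ {ν : Measure E3} [IsProbabilityMeasure ν] {η p : ℝ} (hη : 0 < η) (hp0 : 0 < p)
    (j k : Fin 3 → ℤ) (hd : densBound ν (Aset η j) ≠ ⊤) :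
    ∫⁻ z : E3 × E3, (Wset j).indicator (fun _ => (1:ℝ≥0∞)) z.1
        * psi η p (edist (latt j + z.1) (latt k + z.2)) ∂(ν.prod ν)
      ≤ densBound ν (Aset η j) * Ceta η p := by
  set M := densBound ν (Aset η j) with hM
  have hgmeas : Measurable fun z : E3 × E3 => (Wset j).indicator (fun _ => (1:ℝ≥0∞)) z.1
      * psi η p (edist (latt j + z.1) (latt k + z.2)) :=
    ((measurable_const.indicator (measurableSet_Wset j)).comp measurable_fst).mul
      ((measurable_psi η p).comp
        (Measurable.edist (measurable_fst.const_add _) (measurable_snd.const_add _)))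
  rw [MeasureTheory.lintegral_prod_symm _ hgmeas.aemeasurable]
  have hinner : ∀ y : E3, ∫⁻ x, (Wset j).indicator (fun _ => (1:ℝ≥0∞)) x
      * psi η p (edist (latt j + x) (latt k + y)) ∂ν ≤ M * Ceta η p := by
    intro y
    have htrans : ∀ x : E3, edist (latt j + x) (latt k + y)
        = edist (latt k + y - latt j) x := by
      intro x
      calc edist (latt j + x) (latt k + y) = edist (x + latt j) (latt k + y) := by
            rw [add_comm]
      _ = edist (x + latt j) ((latt k + y - latt j) + latt j) := by
            rw [sub_add_cancel]
      _ = edist x (latt k + y - latt j) := edist_add_right _ _ _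
      _ = edist (latt k + y - latt j) x := edist_comm _ _
    have hptle : ∀ x : E3, (Wset j).indicator (fun _ => (1:ℝ≥0∞)) x
        * psi η p (edist (latt j + x) (latt k + y))
        ≤ (Aset η j).indicator (fun x => psi η p (edist (latt j + x) (latt k + y))) x := by
      intro x
      have h1 : (Wset j).indicator (fun _ => (1:ℝ≥0∞)) x
          * psi η p (edist (latt j + x) (latt k + y))
          = (Wset j).indicator (fun x => psi η p (edist (latt j + x) (latt k + y))) x := by
        by_cases hx : x ∈ Wset j
        · rw [Set.indicator_of_mem hx, Set.indicator_of_mem hx, one_mul]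
        · rw [Set.indicator_of_notMem hx, Set.indicator_of_notMem hx, zero_mul]
      rw [h1]
      exact Set.indicator_le_indicator_of_subset (Wset_subset_Aset hη j)
        (fun x => zero_le) x
    calc ∫⁻ x, (Wset j).indicator (fun _ => (1:ℝ≥0∞)) x
          * psi η p (edist (latt j + x) (latt k + y)) ∂ν
        ≤ ∫⁻ x, (Aset η j).indicator
            (fun x => psi η p (edist (latt j + x) (latt k + y))) x ∂ν :=
          lintegral_mono hptle
    _ = ∫⁻ x in Aset η j, psi η p (edist (latt j + x) (latt k + y)) ∂ν :=
          lintegral_indicator (measurableSet_Aset η j) _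
    _ ≤ M * ∫⁻ x, psi η p (edist (latt j + x) (latt k + y)) :=
          lintegral_densBound (measurableSet_Aset η j) (volume_Aset_ne_top η j) hd _
    _ = M * Ceta η p := by
          congr 1
          calc ∫⁻ x, psi η p (edist (latt j + x) (latt k + y))
              = ∫⁻ x, psi η p (edist (latt k + y - latt j) x) :=
                lintegral_congr fun x => by rw [htrans]
          _ = Ceta η p := lintegral_psi_edist η p _
  calc ∫⁻ y, ∫⁻ x, (Wset j).indicator (fun _ => (1:ℝ≥0∞)) x
        * psi η p (edist (latt j + x) (latt k + y)) ∂ν ∂ν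
      ≤ ∫⁻ _y : E3, M * Ceta η p ∂ν := lintegral_mono hinner
  _ = M * Ceta η p := by rw [lintegral_const, measure_univ, mul_one]

lemma tsum_ite_zero (F : (Fin 3 → ℤ) → ℝ≥0∞) :
    ∑' j : Fin 3 → ℤ, (if j = 0 then 0 else F j)
      = ∑' j : {j : Fin 3 → ℤ // j ≠ 0}, F (j : Fin 3 → ℤ) := by
  classical
  have hsupp : Function.support (fun j : Fin 3 → ℤ => if j = 0 then 0 else F j)
      ⊆ {j : Fin 3 → ℤ | j ≠ 0} := by
    intro j hj
    simp only [Function.mem_support] at hj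
    intro h0
    exact hj (by rw [if_pos h0])
  have h1 := tsum_subtype_eq_of_support_subset hsupp
  rw [← h1]
  exact tsum_congr fun j => by rw [if_neg j.2]

lemma tsum_split_zero (G : (Fin 3 → ℤ) → ℝ≥0∞) :
    ∑' j : Fin 3 → ℤ, G j = G 0 + ∑' j : {j : Fin 3 → ℤ // j ≠ 0}, G (j : Fin 3 → ℤ) := by
  classical
  rw [ENNReal.tsum_eq_add_tsum_ite (0 : Fin 3 → ℤ)]
  congr 1
  refine (tsum_congr fun j => ?_).trans (tsum_ite_zero G)
  by_cases h : j = 0 <;> simp [h]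

end X1Aux

/-- If the `r_j` are independent with common law `ν` and
`Σ_{j ≠ 0} ‖ν‖_{L^∞(W + B_η − j)}^{1/p} < ∞` for some `η > 0` and some `1 ≤ p < 3`,
then `E(X₁^p) < ∞`, i.e. `X₁ ∈ L^p(Ω)`. -/
theorem X1_in_Lp
    (ν : Measure E3) [IsProbabilityMeasure ν]
    {Ω : Type*} [MeasurableSpace Ω] (P : Measure Ω) [IsProbabilityMeasure P]
    (r : (Fin 3 → ℤ) → Ω → E3) (hmeas : ∀ j, Measurable (r j))
    (hindep : iIndepFun r P)
    (hlaw : ∀ j, P.map (r j) = ν)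
    (η : ℝ) (hη : 0 < η) (p : ℝ) (hp1 : 1 ≤ p) (hp3 : p < 3)
    (hsum : ∑' j : {j : Fin 3 → ℤ // j ≠ 0},
        (densBound ν ((fun x => x + latt (j : Fin 3 → ℤ)) ⁻¹' (Wcube + Metric.ball (0 : E3) η)))
          ^ (1 / p) < ⊤) :
    ∫⁻ ω, X1 r ω ^ p ∂P < ⊤ := by
  classical
  have hp0 : (0:ℝ) < p := lt_of_lt_of_le one_pos hp1
  have hq0 : (0:ℝ) < 1/p := by positivity
  have hq1 : (1:ℝ)/p ≤ 1 := by
    rw [div_le_one hp0]; exact hp1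
  set m : (Fin 3 → ℤ) → ℝ≥0∞ := fun k => densBound ν (X1Aux.Aset η k) with hm
  have hsum' : ∑' j : {j : Fin 3 → ℤ // j ≠ 0}, (m (j : Fin 3 → ℤ)) ^ (1/p) < ⊤ := hsum
  have hU : (∑' j : {j : Fin 3 → ℤ // j ≠ 0}, (m (j : Fin 3 → ℤ)) ^ (1/p)) ≠ ⊤ := hsum'.ne
  set U := ∑' j : {j : Fin 3 → ℤ // j ≠ 0}, (m (j : Fin 3 → ℤ)) ^ (1/p) with hUdef
  have hmfin : ∀ k : Fin 3 → ℤ, k ≠ 0 → m k ≠ ⊤ := by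
    intro k hk htop
    have h1 := ENNReal.ne_top_of_tsum_ne_top hU ⟨k, hk⟩
    rw [htop, ENNReal.top_rpow_of_pos hq0] at h1
    exact h1 rfl
  set S := ∑' k : {k : Fin 3 → ℤ // k ≠ 0}, m (k : Fin 3 → ℤ) with hS
  have hSfin : S ≠ ⊤ := by
    have hptw : ∀ k : {k : Fin 3 → ℤ // k ≠ 0},
        m (k : Fin 3 → ℤ) ≤ U ^ (p - 1) * (m (k : Fin 3 → ℤ)) ^ (1/p) := by
      intro k
      by_cases h0 : m (k : Fin 3 → ℤ) = 0
      · rw [h0]; exact zero_le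
      · have hne : (m (k : Fin 3 → ℤ)) ^ (1/p) ≠ 0 := by
          rw [Ne, ENNReal.rpow_eq_zero_iff]
          push_neg
          constructor
          · intro h; exact absurd h h0
          · intro h; exact absurd h (hmfin _ k.2)
        have htop : (m (k : Fin 3 → ℤ)) ^ (1/p) ≠ ⊤ :=
          ENNReal.rpow_ne_top_of_nonneg hq0.le (hmfin _ k.2)
        calc m (k : Fin 3 → ℤ) = ((m (k : Fin 3 → ℤ)) ^ (1/p)) ^ ((p - 1) + 1) := by
              rw [show (p - 1) + 1 = p by ring, one_div, ENNReal.rpow_inv_rpow hp0.ne']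
        _ = ((m (k : Fin 3 → ℤ)) ^ (1/p)) ^ (p - 1) * (m (k : Fin 3 → ℤ)) ^ (1/p) := by
              rw [ENNReal.rpow_add _ _ hne htop, ENNReal.rpow_one]
        _ ≤ U ^ (p - 1) * (m (k : Fin 3 → ℤ)) ^ (1/p) :=
              mul_le_mul_left (ENNReal.rpow_le_rpow (ENNReal.le_tsum k) (by linarith)) _
    have hlt : U ^ (p - 1) * U < ⊤ :=
      ENNReal.mul_lt_top (ENNReal.rpow_lt_top_of_nonneg (by linarith) hU) hsum'
    refine ne_top_of_le_ne_top hlt.ne ?_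
    calc S ≤ ∑' k : {k : Fin 3 → ℤ // k ≠ 0}, U ^ (p - 1) * (m (k : Fin 3 → ℤ)) ^ (1/p) :=
          ENNReal.tsum_le_tsum hptw
    _ = U ^ (p - 1) * U := by rw [ENNReal.tsum_mul_left]
  set ηq : ℝ≥0∞ := (ENNReal.ofReal η)⁻¹ ^ p with hηqdef
  have hηq : ηq ≠ ⊤ := by
    have h1 : (ENNReal.ofReal η)⁻¹ ≠ ⊤ := by
      rw [Ne, ENNReal.inv_eq_top, ENNReal.ofReal_eq_zero]
      exact not_le.2 hη
    exact (ENNReal.rpow_lt_top_of_nonneg hp0.le h1).ne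
  have hCfin : X1Aux.Ceta η p ≠ ⊤ := (X1Aux.Ceta_lt_top hη hp0 hp3).ne
  set D : ℝ≥0∞ := ηq + X1Aux.Ceta η p * S with hD
  have hDfin : D ≠ ⊤ := by
    rw [hD]
    exact ENNReal.add_ne_top.2 ⟨hηq, ENNReal.mul_ne_top hCfin hSfin⟩
  set f : (Fin 3 → ℤ) → Ω → ℝ≥0∞ := fun j ω =>
    Wcube.indicator (fun _ => (nnd r j ω)⁻¹) (latt j + r j ω) with hfdef
  have hnndmeas : ∀ j, Measurable fun ω => nnd r j ω := by
    intro j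
    exact Measurable.iInf fun k =>
      Measurable.edist ((hmeas j).const_add _) ((hmeas (k : Fin 3 → ℤ)).const_add _)
  have hfmeas : ∀ j, Measurable (f j) := by
    intro j
    have heq : f j = fun ω =>
        (X1Aux.Wset j).indicator (fun _ => (1:ℝ≥0∞)) (r j ω) * (nnd r j ω)⁻¹ := by
      funext ω
      rw [hfdef]
      simp only [Set.indicator_apply]
      by_cases h : latt j + r j ω ∈ Wcube
      · rw [if_pos h, if_pos (show r j ω ∈ X1Aux.Wset j from h), one_mul]
      · rw [if_neg h, if_neg (show r j ω ∉ X1Aux.Wset j from h), zero_mul]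
    rw [heq]
    exact (((measurable_const.indicator (X1Aux.measurableSet_Wset j)).comp (hmeas j)).mul
      ((hnndmeas j).inv))
  haveI : Denumerable (Fin 3 → ℤ) := Denumerable.ofEncodableOfInfinite _
  set e : ℕ ≃ (Fin 3 → ℤ) := (Denumerable.eqv (Fin 3 → ℤ)).symm with he
  have hmink := X1Aux.lintegral_tsum_rpow P e f hfmeas hp1
  set T : (Fin 3 → ℤ) → ℝ≥0∞ := fun j => ∫⁻ ω, f j ω ^ p ∂P with hT
  set R := ∑' j, (T j) ^ (1/p) with hR
  suffices hRfin : R ≠ ⊤ by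
    calc ∫⁻ ω, X1 r ω ^ p ∂P = ∫⁻ ω, (∑' j, f j ω) ^ p ∂P := rfl
    _ ≤ R ^ p := hmink
    _ < ⊤ := ENNReal.rpow_lt_top_of_nonneg hp0.le hRfin
  -- transfer to the product measure
  have hpairmap : ∀ (j k : Fin 3 → ℤ), j ≠ k → ∀ g : E3 × E3 → ℝ≥0∞, Measurable g →
      ∫⁻ ω, g (r j ω, r k ω) ∂P = ∫⁻ z, g z ∂(ν.prod ν) := by
    intro j k hjk g hg
    have hmapeq := (ProbabilityTheory.indepFun_iff_map_prod_eq_prod_map_map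
      (hmeas j).aemeasurable (hmeas k).aemeasurable).1 (hindep.indepFun hjk)
    rw [← lintegral_map hg ((hmeas j).prodMk (hmeas k)), hmapeq, hlaw j, hlaw k]
  -- per-j estimate
  have hTj : ∀ j, T j ≤ ν (X1Aux.Wset j) * D
      + (if j = 0 then 0 else m j * X1Aux.Ceta η p) := by
    intro j
    set χ : Ω → ℝ≥0∞ := fun ω => (X1Aux.Wset j).indicator (fun _ => (1:ℝ≥0∞)) (r j ω) with hχ
    have hχmeas : Measurable χ :=
      (measurable_const.indicator (X1Aux.measurableSet_Wset j)).comp (hmeas j)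
    set t : {k : Fin 3 → ℤ // k ≠ j} → Ω → ℝ≥0∞ := fun k ω =>
      χ ω * X1Aux.psi η p
        (edist (latt j + r j ω) (latt (k:Fin 3 → ℤ) + r (k:Fin 3 → ℤ) ω)) with ht
    have htmeas : ∀ k, Measurable (t k) := fun k =>
      hχmeas.mul ((X1Aux.measurable_psi η p).comp
        (Measurable.edist ((hmeas j).const_add _) ((hmeas (k:Fin 3 → ℤ)).const_add _)))
    have hpt : ∀ ω, f j ω ^ p ≤ χ ω * ηq + ∑' k, t k ω := by
      intro ω
      by_cases h : latt j + r j ω ∈ Wcube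
      · have hχ1 : χ ω = 1 := by
          rw [hχ]; exact Set.indicator_of_mem (show r j ω ∈ X1Aux.Wset j from h) _
        have hf1 : f j ω = (nnd r j ω)⁻¹ := by
          rw [hfdef]; exact Set.indicator_of_mem h _
        have hts : ∀ k : {k : Fin 3 → ℤ // k ≠ j}, t k ω
            = X1Aux.psi η p
              (edist (latt j + r j ω) (latt (k:Fin 3 → ℤ) + r (k:Fin 3 → ℤ) ω)) := by
          intro k; rw [ht]; simp only [hχ1, one_mul]
        rw [hf1, hχ1, one_mul, tsum_congr hts]
        exact X1Aux.nnd_bound r j ω hp0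
      · have hf0 : f j ω = 0 := by
          rw [hfdef]; exact Set.indicator_of_notMem h _
        rw [hf0, ENNReal.zero_rpow_of_pos hp0]
        exact zero_le
    have hint : T j ≤ ηq * ν (X1Aux.Wset j) + ∑' k, ∫⁻ ω, t k ω ∂P := by
      calc T j ≤ ∫⁻ ω, (χ ω * ηq + ∑' k, t k ω) ∂P := lintegral_mono hpt
      _ = ∫⁻ ω, χ ω * ηq ∂P + ∫⁻ ω, ∑' k, t k ω ∂P :=
          lintegral_add_left (hχmeas.mul measurable_const) _
      _ = ηq * ν (X1Aux.Wset j) + ∑' k, ∫⁻ ω, t k ω ∂P := by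
          congr 1
          · have hind : ∀ ω, χ ω * ηq
                = (r j ⁻¹' X1Aux.Wset j).indicator (fun _ => ηq) ω := by
              intro ω
              rw [hχ]
              simp only [Set.indicator_apply, Set.mem_preimage]
              split_ifs <;> simp
            rw [lintegral_congr hind,
              lintegral_indicator_const ((X1Aux.measurableSet_Wset j).preimage (hmeas j)),
              show P (r j ⁻¹' X1Aux.Wset j) = ν (X1Aux.Wset j) by
                rw [← hlaw j, Measure.map_apply (hmeas j) (X1Aux.measurableSet_Wset j)]]
          · exact lintegral_tsum fun k => (htmeas k).aemeasurable
    have hpair : ∀ k : {k : Fin 3 → ℤ // k ≠ j},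
        ∫⁻ ω, t k ω ∂P ≤ if (k : Fin 3 → ℤ) = 0 then m j * X1Aux.Ceta η p
          else ν (X1Aux.Wset j) * (m (k : Fin 3 → ℤ) * X1Aux.Ceta η p) := by
      intro k
      have hgmeas : Measurable fun z : E3 × E3 =>
          (X1Aux.Wset j).indicator (fun _ => (1:ℝ≥0∞)) z.1
          * X1Aux.psi η p (edist (latt j + z.1) (latt (k:Fin 3 → ℤ) + z.2)) :=
        ((measurable_const.indicator (X1Aux.measurableSet_Wset j)).comp measurable_fst).mul
          ((X1Aux.measurable_psi η p).comp
            (Measurable.edist (measurable_fst.const_add _) (measurable_snd.const_add _)))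
      have htrans : ∫⁻ ω, t k ω ∂P = ∫⁻ z : E3 × E3,
          (X1Aux.Wset j).indicator (fun _ => (1:ℝ≥0∞)) z.1
          * X1Aux.psi η p (edist (latt j + z.1) (latt (k:Fin 3 → ℤ) + z.2)) ∂(ν.prod ν) := by
        rw [← hpairmap j (k : Fin 3 → ℤ) (Ne.symm k.2) _ hgmeas]
      rw [htrans]
      by_cases hk0 : (k : Fin 3 → ℤ) = 0
      · rw [if_pos hk0]
        have hj0 : j ≠ 0 := fun h => k.2 (hk0.trans h.symm)
        exact X1Aux.pair_est₂ hη hp0 j (k : Fin 3 → ℤ) (hmfin j hj0)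
      · rw [if_neg hk0]
        exact X1Aux.pair_est₁ hη hp0 j (k : Fin 3 → ℤ) (hmfin _ hk0)
    have hsum_pairs : ∑' k : {k : Fin 3 → ℤ // k ≠ j}, ∫⁻ ω, t k ω ∂P
        ≤ (if j = 0 then 0 else m j * X1Aux.Ceta η p)
          + ν (X1Aux.Wset j) * (X1Aux.Ceta η p * S) := by
      refine (ENNReal.tsum_le_tsum hpair).trans ?_
      by_cases hj : j = 0
      · subst hj
        rw [if_pos rfl, zero_add]
        have hcongr : ∀ k : {k : Fin 3 → ℤ // k ≠ (0 : Fin 3 → ℤ)},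
            (if (k : Fin 3 → ℤ) = 0 then m 0 * X1Aux.Ceta η p
              else ν (X1Aux.Wset 0) * (m (k : Fin 3 → ℤ) * X1Aux.Ceta η p))
            = ν (X1Aux.Wset 0) * (m (k : Fin 3 → ℤ) * X1Aux.Ceta η p) := fun k => if_neg k.2
        rw [tsum_congr hcongr, ENNReal.tsum_mul_left]
        refine le_of_eq ?_
        congr 1
        rw [ENNReal.tsum_mul_right, mul_comm]
      · set k₀ : {k : Fin 3 → ℤ // k ≠ j} := ⟨0, fun h => hj h.symm⟩ with hk₀
        rw [ENNReal.tsum_eq_add_tsum_ite k₀, if_neg hj]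
        have hfirst : (if (k₀ : Fin 3 → ℤ) = 0 then m j * X1Aux.Ceta η p
            else ν (X1Aux.Wset j) * (m (k₀ : Fin 3 → ℤ) * X1Aux.Ceta η p))
            = m j * X1Aux.Ceta η p := if_pos rfl
        rw [hfirst]
        gcongr
        -- remaining sum ≤ ν (Wset j) * (Ceta * S)
        have hle : ∑' k : {k : Fin 3 → ℤ // k ≠ j},
            (if k = k₀ then 0 else
              (if (k : Fin 3 → ℤ) = 0 then m j * X1Aux.Ceta η p
                else ν (X1Aux.Wset j) * (m (k : Fin 3 → ℤ) * X1Aux.Ceta η p)))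
            ≤ ∑' k : {k : Fin 3 → ℤ // k ≠ 0},
              ν (X1Aux.Wset j) * (m (k : Fin 3 → ℤ) * X1Aux.Ceta η p) := by
          refine Summable.tsum_le_tsum_of_inj
            (fun k : {k : Fin 3 → ℤ // k ≠ j} =>
              if h : (k : Fin 3 → ℤ) = 0 then (⟨j, hj⟩ : {k : Fin 3 → ℤ // k ≠ 0})
                else ⟨(k : Fin 3 → ℤ), h⟩)
            ?_ (fun c _ => zero_le) ?_ ENNReal.summable ENNReal.summable
          · intro a b hab
            simp only [] at hab
            by_cases ha : (a : Fin 3 → ℤ) = 0 <;> by_cases hb : (b : Fin 3 → ℤ) = 0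
            · exact Subtype.ext (ha.trans hb.symm)
            · rw [dif_pos ha, dif_neg hb] at hab
              exact absurd (Subtype.mk_eq_mk.1 hab).symm b.2
            · rw [dif_neg ha, dif_pos hb] at hab
              exact absurd (Subtype.mk_eq_mk.1 hab) a.2
            · rw [dif_neg ha, dif_neg hb] at hab
              exact Subtype.ext (Subtype.mk_eq_mk.1 hab)
          · intro k
            by_cases hk : k = k₀
            · rw [if_pos hk]; exact zero_le
            · have hkne : (k : Fin 3 → ℤ) ≠ 0 := by
                intro h
                exact hk (Subtype.ext (h.trans (congrArg Subtype.val hk₀).symm))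
              rw [if_neg hk, if_neg hkne, dif_neg hkne]
        refine (le_of_eq (tsum_congr fun k => ?_)).trans (hle.trans ?_)
        · by_cases h : k = k₀ <;> simp [h]
        · rw [ENNReal.tsum_mul_left]
          refine le_of_eq ?_
          congr 1
          rw [ENNReal.tsum_mul_right, mul_comm]
    calc T j ≤ ηq * ν (X1Aux.Wset j)
        + ((if j = 0 then 0 else m j * X1Aux.Ceta η p)
          + ν (X1Aux.Wset j) * (X1Aux.Ceta η p * S)) := by
          refine hint.trans ?_
          gcongr
    _ = ν (X1Aux.Wset j) * D + (if j = 0 then 0 else m j * X1Aux.Ceta η p) := by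
        rw [hD]; ring
  -- summing over j
  set KA := volume (Wcube + Metric.ball (0:E3) η) with hKA
  have hKAfin : KA ≠ ⊤ := X1Aux.volume_WB_lt_top.ne
  have hWjm : ∀ j : Fin 3 → ℤ, j ≠ 0 → ν (X1Aux.Wset j) ≤ m j * KA := by
    intro j hj
    have h1 := X1Aux.densBound_le (ν := ν) (X1Aux.Wset_subset_Aset hη j)
      (X1Aux.measurableSet_Wset j)
      (((measure_mono (X1Aux.Wset_subset_Aset hη j)).trans_lt
        ((X1Aux.volume_Aset_ne_top η j).lt_top)).ne) (hmfin j hj)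
    refine h1.trans ?_
    gcongr
    calc volume (X1Aux.Wset j) ≤ volume (X1Aux.Aset η j) :=
          measure_mono (X1Aux.Wset_subset_Aset hη j)
    _ = KA := X1Aux.volume_Aset η j
  have hterm : ∀ j, (T j) ^ (1/p)
      ≤ (ν (X1Aux.Wset j) * D) ^ (1/p)
        + (if j = 0 then 0 else m j * X1Aux.Ceta η p) ^ (1/p) := fun j =>
    (ENNReal.rpow_le_rpow (hTj j) hq0.le).trans
      (ENNReal.rpow_add_le_add_rpow _ _ hq0.le hq1)
  have h2nd : ∑' j : Fin 3 → ℤ, (if j = 0 then 0 else m j * X1Aux.Ceta η p) ^ (1/p) < ⊤ := by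
    have hco : ∀ j : Fin 3 → ℤ, (if j = 0 then 0 else m j * X1Aux.Ceta η p) ^ (1/p)
        = (if j = 0 then 0 else (m j * X1Aux.Ceta η p) ^ (1/p)) := by
      intro j
      split_ifs
      · exact ENNReal.zero_rpow_of_pos hq0
      · rfl
    rw [tsum_congr hco, X1Aux.tsum_ite_zero]
    have hco2 : ∀ k : {j : Fin 3 → ℤ // j ≠ 0},
        (m (k : Fin 3 → ℤ) * X1Aux.Ceta η p) ^ (1/p)
        = (m (k : Fin 3 → ℤ)) ^ (1/p) * (X1Aux.Ceta η p) ^ (1/p) := fun k =>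
      ENNReal.mul_rpow_of_nonneg _ _ hq0.le
    rw [tsum_congr hco2, ENNReal.tsum_mul_right]
    exact ENNReal.mul_lt_top hsum' (ENNReal.rpow_lt_top_of_nonneg hq0.le hCfin)
  have h1st : ∑' j : Fin 3 → ℤ, (ν (X1Aux.Wset j) * D) ^ (1/p) < ⊤ := by
    have hterm2 : ∀ j : Fin 3 → ℤ, (ν (X1Aux.Wset j) * D) ^ (1/p)
        ≤ D ^ (1/p) * (if j = 0 then 1 else (m j * KA) ^ (1/p)) := by
      intro j
      rw [ENNReal.mul_rpow_of_nonneg _ _ hq0.le]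
      by_cases hj : j = 0
      · rw [if_pos hj, mul_one]
        have h1 : (ν (X1Aux.Wset j)) ^ ((1:ℝ)/p) ≤ 1 := by
          calc (ν (X1Aux.Wset j)) ^ ((1:ℝ)/p) ≤ (1 : ℝ≥0∞) ^ ((1:ℝ)/p) :=
                ENNReal.rpow_le_rpow prob_le_one hq0.le
          _ = 1 := ENNReal.one_rpow _
        calc (ν (X1Aux.Wset j)) ^ ((1:ℝ)/p) * D ^ ((1:ℝ)/p)
            ≤ 1 * D ^ ((1:ℝ)/p) := mul_le_mul_left h1 _
        _ = D ^ ((1:ℝ)/p) := one_mul _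
      · rw [if_neg hj]
        calc (ν (X1Aux.Wset j)) ^ ((1:ℝ)/p) * D ^ ((1:ℝ)/p)
            ≤ (m j * KA) ^ ((1:ℝ)/p) * D ^ ((1:ℝ)/p) :=
              mul_le_mul_left (ENNReal.rpow_le_rpow (hWjm j hj) hq0.le) _
        _ = D ^ ((1:ℝ)/p) * (m j * KA) ^ ((1:ℝ)/p) := mul_comm _ _
    refine lt_of_le_of_lt (ENNReal.tsum_le_tsum hterm2) ?_
    rw [ENNReal.tsum_mul_left]
    refine ENNReal.mul_lt_top (ENNReal.rpow_lt_top_of_nonneg hq0.le hDfin) ?_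
    rw [X1Aux.tsum_split_zero (fun j => if j = 0 then 1 else (m j * KA) ^ (1/p)),
      if_pos rfl]
    have hco3 : ∀ k : {j : Fin 3 → ℤ // j ≠ 0},
        (if (k : Fin 3 → ℤ) = 0 then 1 else (m (k : Fin 3 → ℤ) * KA) ^ ((1:ℝ)/p))
        = (m (k : Fin 3 → ℤ) * KA) ^ ((1:ℝ)/p) := fun k => if_neg k.2
    rw [tsum_congr hco3]
    refine ENNReal.add_lt_top.2 ⟨ENNReal.one_lt_top, ?_⟩
    have hco4 : ∀ k : {j : Fin 3 → ℤ // j ≠ 0},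
        (m (k : Fin 3 → ℤ) * KA) ^ (1/p)
        = (m (k : Fin 3 → ℤ)) ^ (1/p) * KA ^ (1/p) := fun k =>
      ENNReal.mul_rpow_of_nonneg _ _ hq0.le
    rw [tsum_congr hco4, ENNReal.tsum_mul_right]
    exact ENNReal.mul_lt_top hsum' (ENNReal.rpow_lt_top_of_nonneg hq0.le hKAfin)
  refine ne_top_of_le_ne_top (ENNReal.add_lt_top.2 ⟨h1st, h2nd⟩).ne ?_
  rw [hR, ← ENNReal.tsum_add]
  exact ENNReal.tsum_le_tsum hterm
end
end

section
/- Assume the family (r_j)_{j∈ℤ³} is independent, each with law ν, and that there exist κ > 0, a point v with the ball B_κ(v) contained in W, and two distinct indices i ≠ j in ℤ³, such that ν(A) ≥ κ·λ(A) for every Borel set A ⊆ (B_κ(v) − i) ∪ (B_κ(v) − j). Then E(X₁³) = ∞, i.e. X₁ ∉ L³(Ω). -/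
open MeasureTheory ProbabilityTheory ENNReal

noncomputable section

lemma key_div (p : E3) {ε : ℝ} (hε : 0 < ε) :
    ∫⁻ z in Metric.ball p ε, (edist p z ^ (3 : ℝ))⁻¹ ∂volume = ⊤ := by
  set V : ℝ≥0∞ := volume (Metric.ball (0 : E3) 1) with hV
  have hV0 : V ≠ 0 := (Metric.measure_ball_pos volume 0 one_pos).ne'
  have hVtop : V ≠ ⊤ := measure_ball_lt_top.ne
  have hdim : Module.finrank ℝ E3 = 3 := finrank_euclideanSpace_fin
  set b : ℕ → ℝ := fun n => ε / 2 ^ n with hb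
  have hbpos : ∀ n, 0 < b n := fun n => div_pos hε (by positivity)
  have hbanti : ∀ {n m : ℕ}, n ≤ m → b m ≤ b n := by
    intro n m hnm
    exact div_le_div_of_nonneg_left hε.le (by positivity)
      (pow_le_pow_right₀ one_le_two hnm)
  have hbsucc : ∀ n, b (n + 1) = b n / 2 := by
    intro n; simp [hb, pow_succ]; ring
  set A : ℕ → Set E3 := fun n => Metric.ball p (b n) \ Metric.ball p (b (n + 1)) with hA
  have hAmeas : ∀ n, MeasurableSet (A n) :=
    fun n => measurableSet_ball.diff measurableSet_ball
  have hsub : ∀ n, A n ⊆ Metric.ball p ε := by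
    intro n z hz
    have hb0 : b n ≤ ε := le_trans (hbanti (Nat.zero_le n)) (by simp [hb])
    exact Metric.ball_subset_ball hb0 hz.1
  have hdisj : Pairwise (Function.onFun Disjoint A) := by
    have H : ∀ {n m : ℕ}, n < m → Disjoint (A n) (A m) := by
      intro n m hnm
      refine Set.disjoint_left.mpr fun z hzn hzm => ?_
      exact hzn.2 (Metric.ball_subset_ball (hbanti hnm) hzm.1)
    intro n m hnm
    rcases lt_or_gt_of_ne hnm with h | h
    · exact H h
    · exact (H h).symm
  have hvol : ∀ n, ENNReal.ofReal (7 / 8 * b n ^ 3) * V ≤ volume (A n) := by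
    intro n
    have h1 : volume (A n)
        = volume (Metric.ball p (b n)) - volume (Metric.ball p (b (n + 1))) :=
      measure_diff (Metric.ball_subset_ball (hbanti n.le_succ))
        measurableSet_ball.nullMeasurableSet measure_ball_lt_top.ne
    rw [h1, Measure.addHaar_ball_of_pos _ _ (hbpos n),
      Measure.addHaar_ball_of_pos _ _ (hbpos (n + 1)), hdim,
      ← ENNReal.sub_mul (fun _ _ => hVtop), ← ENNReal.ofReal_sub _ (by positivity)]
    refine mul_le_mul_left (ENNReal.ofReal_le_ofReal ?_) V
    rw [hbsucc n]
    nlinarith [hbpos n, (hbpos n).le]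
  have hlow : ∀ n, ∀ z ∈ A n,
      (ENNReal.ofReal (b n ^ 3))⁻¹ ≤ (edist p z ^ (3 : ℝ))⁻¹ := by
    intro n z hz
    have h1 : edist p z ≤ ENNReal.ofReal (b n) := by
      rw [edist_dist]
      exact ENNReal.ofReal_le_ofReal (by
        have := hz.1; rw [Metric.mem_ball, dist_comm] at this; exact this.le)
    refine ENNReal.inv_le_inv.mpr ?_
    calc edist p z ^ (3 : ℝ) ≤ ENNReal.ofReal (b n) ^ (3 : ℝ) :=
          ENNReal.rpow_le_rpow h1 (by norm_num)
      _ = ENNReal.ofReal (b n ^ 3) := by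
          rw [ENNReal.ofReal_rpow_of_pos (hbpos n), ← Real.rpow_natCast (b n) 3]
          norm_num
  set c : ℝ≥0∞ := ENNReal.ofReal (7 / 8) * V with hc
  have hc0 : c ≠ 0 := by
    simp only [hc, ne_eq, mul_eq_zero, not_or]
    exact ⟨by simp [ENNReal.ofReal_eq_zero], hV0⟩
  have hterm : ∀ n, c ≤ ∫⁻ z in A n, (edist p z ^ (3 : ℝ))⁻¹ ∂volume := by
    intro n
    have h1 : (ENNReal.ofReal (b n ^ 3))⁻¹ * volume (A n)
        ≤ ∫⁻ z in A n, (edist p z ^ (3 : ℝ))⁻¹ ∂volume := by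
      rw [← setLIntegral_const (A n) ((ENNReal.ofReal (b n ^ 3))⁻¹)]
      exact setLIntegral_mono' (hAmeas n) (hlow n)
    refine le_trans ?_ h1
    have h2 : (ENNReal.ofReal (b n ^ 3))⁻¹ * (ENNReal.ofReal (7 / 8 * b n ^ 3) * V)
        ≤ (ENNReal.ofReal (b n ^ 3))⁻¹ * volume (A n) :=
      mul_le_mul_right (hvol n) _
    refine le_trans (le_of_eq ?_) h2
    rw [ENNReal.ofReal_mul (by norm_num), hc]
    rw [show (ENNReal.ofReal (b n ^ 3))⁻¹ * (ENNReal.ofReal (7/8) * ENNReal.ofReal (b n ^ 3) * V)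
        = (ENNReal.ofReal (b n ^ 3))⁻¹ * ENNReal.ofReal (b n ^ 3) * (ENNReal.ofReal (7/8) * V)
        by ring]
    rw [ENNReal.inv_mul_cancel (by simp [ENNReal.ofReal_eq_zero]; positivity) ENNReal.ofReal_ne_top,
      one_mul]
  refine top_unique ?_
  calc (⊤ : ℝ≥0∞) = ∑' _ : ℕ, c := (ENNReal.tsum_const_eq_top_of_ne_zero hc0).symm
    _ ≤ ∑' n, ∫⁻ z in A n, (edist p z ^ (3 : ℝ))⁻¹ ∂volume := ENNReal.tsum_le_tsum hterm
    _ = ∫⁻ z in ⋃ n, A n, (edist p z ^ (3 : ℝ))⁻¹ ∂volume := (lintegral_iUnion hAmeas hdisj _).symm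
    _ ≤ ∫⁻ z in Metric.ball p ε, (edist p z ^ (3 : ℝ))⁻¹ ∂volume :=
        lintegral_mono_set (Set.iUnion_subset hsub)

set_option maxHeartbeats 1000000 in
/-- If the `r_j` are independent with common law `ν` and there are `κ > 0`,
a ball `B_κ(v) ⊆ W` and distinct `i ≠ j` in `ℤ³` such that `ν ≥ κ·λ` on
`(B_κ(v) − i) ∪ (B_κ(v) − j)`, then `E(X₁³) = ∞`, i.e. `X₁ ∉ L³(Ω)`. -/
theorem X1_not_in_L3
    (ν : Measure E3) [IsProbabilityMeasure ν]
    {Ω : Type*} [MeasurableSpace Ω] (P : Measure Ω) [IsProbabilityMeasure P]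
    (r : (Fin 3 → ℤ) → Ω → E3) (hmeas : ∀ j, Measurable (r j))
    (hindep : iIndepFun r P)
    (hlaw : ∀ j, P.map (r j) = ν)
    (κ : ℝ) (hκ : 0 < κ) (v : E3) (hball : Metric.ball v κ ⊆ Wcube)
    (i j : Fin 3 → ℤ) (hij : i ≠ j)
    (hlower : ∀ A : Set E3, MeasurableSet A →
        A ⊆ ((fun x => x + latt i) ⁻¹' Metric.ball v κ) ∪
            ((fun x => x + latt j) ⁻¹' Metric.ball v κ) →
        ENNReal.ofReal κ * volume A ≤ ν A) :
    ∫⁻ ω, X1 r ω ^ (3 : ℝ) ∂P = ⊤ := by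
  classical
  set B : Set E3 := Metric.ball v κ with hBdef
  set Si : Set E3 := (fun x => x + latt i) ⁻¹' B with hSidef
  set Sj : Set E3 := (fun x => x + latt j) ⁻¹' B with hSjdef
  have hSi : MeasurableSet Si := (measurable_add_const (latt i)) measurableSet_ball
  have hSj : MeasurableSet Sj := (measurable_add_const (latt j)) measurableSet_ball
  set F : E3 × E3 → ℝ≥0∞ :=
    fun q => (Si ×ˢ Sj).indicator
      (fun q => (edist (q.1 + latt i) (q.2 + latt j) ^ (3 : ℝ))⁻¹) q with hFdef
  have hFmeas : Measurable F := by
    refine Measurable.indicator ?_ (hSi.prod hSj)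
    have h1 : Measurable fun q : E3 × E3 => edist (q.1 + latt i) (q.2 + latt j) :=
      ((continuous_fst.add continuous_const).edist
        (continuous_snd.add continuous_const)).measurable
    exact (h1.pow measurable_const).inv
  -- pointwise bound
  have hpt : ∀ ω, F (r i ω, r j ω) ≤ X1 r ω ^ (3 : ℝ) := by
    intro ω
    by_cases h : (r i ω, r j ω) ∈ Si ×ˢ Sj
    · simp only [hFdef]
      simp only [Set.indicator_of_mem h]
      obtain ⟨h1, h2⟩ := h
      have hi' : latt i + r i ω ∈ B := by rw [add_comm]; exact h1
      have hX : (edist (latt i + r i ω) (latt j + r j ω))⁻¹ ≤ X1 r ω := by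
        have hterm : Wcube.indicator (fun _ => (nnd r i ω)⁻¹) (latt i + r i ω) ≤ X1 r ω := by
          unfold X1
          exact ENNReal.le_tsum i
        rw [Set.indicator_of_mem (hball hi')] at hterm
        refine le_trans ?_ hterm
        refine ENNReal.inv_le_inv.mpr ?_
        exact iInf_le (fun k : {k : Fin 3 → ℤ // k ≠ i} =>
          edist (latt i + r i ω) (latt (k : Fin 3 → ℤ) + r (k : Fin 3 → ℤ) ω)) ⟨j, hij.symm⟩
      calc (edist (r i ω + latt i) (r j ω + latt j) ^ (3 : ℝ))⁻¹
          = ((edist (latt i + r i ω) (latt j + r j ω))⁻¹) ^ (3 : ℝ) := by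
            rw [ENNReal.inv_rpow, add_comm (r i ω), add_comm (r j ω)]
        _ ≤ X1 r ω ^ (3 : ℝ) := ENNReal.rpow_le_rpow hX (by norm_num)
    · simp only [hFdef]
      simp [Set.indicator_of_notMem h]
  -- measure comparison
  have hrestr : ∀ S : Set E3, MeasurableSet S → S ⊆ Si ∪ Sj →
      (ENNReal.ofReal κ) • volume.restrict S ≤ ν.restrict S := by
    intro S hS hsub'
    refine Measure.le_iff.mpr fun t ht => ?_
    rw [Measure.smul_apply, Measure.restrict_apply ht, Measure.restrict_apply ht, smul_eq_mul]
    exact hlower (t ∩ S) (ht.inter hS) (Set.inter_subset_right.trans hsub')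
  have hlint : ∀ S : Set E3, MeasurableSet S → S ⊆ Si ∪ Sj → ∀ f : E3 → ℝ≥0∞,
      ENNReal.ofReal κ * ∫⁻ x in S, f x ∂volume ≤ ∫⁻ x, f x ∂ν := by
    intro S hS hsub' f
    calc ENNReal.ofReal κ * ∫⁻ x in S, f x ∂volume
        = ∫⁻ x, f x ∂((ENNReal.ofReal κ) • volume.restrict S) :=
          by rw [lintegral_smul_measure, smul_eq_mul]
      _ ≤ ∫⁻ x, f x ∂(ν.restrict S) := lintegral_mono' (hrestr S hS hsub') le_rfl
      _ ≤ ∫⁻ x, f x ∂ν := lintegral_mono' Measure.restrict_le_self le_rfl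
  have hκ0 : ENNReal.ofReal κ ≠ 0 := (ENNReal.ofReal_pos.mpr hκ).ne'
  have hB0 : volume B ≠ 0 := (Metric.measure_ball_pos volume v hκ).ne'
  have hνSi : ν Si ≠ 0 := by
    have h1 := hlower Si hSi Set.subset_union_left
    have h2 : volume Si = volume B := by
      rw [hSidef]; exact measure_preimage_add_right volume (latt i) B
    rw [h2] at h1
    intro h0
    rw [h0] at h1
    exact (ENNReal.mul_pos hκ0 hB0).ne' (le_antisymm h1 zero_le)
  -- inner integral is infinite
  have hinner : ∀ x ∈ Si, (⊤ : ℝ≥0∞) ≤ ∫⁻ y, F (x, y) ∂ν := by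
    intro x hx
    have hxB : x + latt i ∈ B := hx
    have hkey : ∫⁻ y in Sj, F (x, y) ∂volume = ⊤ := by
      have hcong : ∀ y ∈ Sj, F (x, y)
          = (edist (x + latt i) (y + latt j) ^ (3 : ℝ))⁻¹ := by
        intro y hy
        simp only [hFdef]
        exact Set.indicator_of_mem (Set.mem_prod.mpr ⟨hx, hy⟩) _
      rw [setLIntegral_congr_fun hSj hcong]
      have hmp : MeasurePreserving (fun y : E3 => y + latt j) volume volume :=
        measurePreserving_add_right volume (latt j)
      have hemb : MeasurableEmbedding (fun y : E3 => y + latt j) :=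
        (MeasurableEquiv.addRight (latt j)).measurableEmbedding
      have hcv := hmp.setLIntegral_comp_preimage_emb hemb
        (fun z => (edist (x + latt i) z ^ (3 : ℝ))⁻¹) B
      rw [hSjdef, hcv]
      set ε : ℝ := κ - dist (x + latt i) v with hεdef
      have hε : 0 < ε := sub_pos.mpr (Metric.mem_ball.mp hxB)
      refine top_unique ?_
      calc (⊤ : ℝ≥0∞)
          = ∫⁻ z in Metric.ball (x + latt i) ε,
              (edist (x + latt i) z ^ (3 : ℝ))⁻¹ ∂volume := (key_div _ hε).symm
        _ ≤ ∫⁻ z in B, (edist (x + latt i) z ^ (3 : ℝ))⁻¹ ∂volume := by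
            refine lintegral_mono_set (Metric.ball_subset_ball' ?_)
            rw [hεdef]; linarith
    have h2 := hlint Sj hSj Set.subset_union_right (fun y => F (x, y))
    rw [hkey, ENNReal.mul_top hκ0] at h2
    exact h2
  -- joint law
  have hY : Measurable fun ω => (r i ω, r j ω) := (hmeas i).prodMk (hmeas j)
  have hmap : P.map (fun ω => (r i ω, r j ω)) = ν.prod ν := by
    have h := hindep.indepFun hij
    rw [indepFun_iff_map_prod_eq_prod_map_map (hmeas i).aemeasurable
      (hmeas j).aemeasurable] at h
    rw [h, hlaw i, hlaw j]
  have hmain : ∫⁻ q, F q ∂(ν.prod ν) = ⊤ := by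
    rw [lintegral_prod F hFmeas.aemeasurable]
    refine top_unique ?_
    calc (⊤ : ℝ≥0∞) = ⊤ * ν Si := (ENNReal.top_mul hνSi).symm
      _ = ∫⁻ x in Si, ⊤ ∂ν := (setLIntegral_const Si ⊤).symm
      _ = ∫⁻ x, Si.indicator (fun _ => (⊤ : ℝ≥0∞)) x ∂ν := (lintegral_indicator hSi _).symm
      _ ≤ ∫⁻ x, ∫⁻ y, F (x, y) ∂ν ∂ν := by
          refine lintegral_mono fun x => ?_
          by_cases hx : x ∈ Si
          · rw [Set.indicator_of_mem hx]
            exact hinner x hx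
          · rw [Set.indicator_of_notMem hx]
            exact zero_le
  have hle : ∫⁻ q, F q ∂(ν.prod ν) ≤ ∫⁻ ω, X1 r ω ^ (3 : ℝ) ∂P := by
    rw [← hmap, lintegral_map hFmeas hY]
    exact lintegral_mono hpt
  exact top_unique (hmain ▸ hle)
end
end

section
/- Assume the family (r_j)_{j∈ℤ³} is independent, each with law ν, and that S := Σ_{k ∈ ℤ³, k ≠ 0} ‖ν‖_{L^∞(W + B_η − k)} < ∞ for some η > 0. Then for every j ∈ ℤ³ and every 0 < ε < η one has: (i) if j = 0, P(r₀ ∈ W and δ₀ < ε) ≤ (4π/3)·S·ν(W)·ε³; (ii) if j ≠ 0, P(r₀ ∈ W − j and δ₀ < ε) ≤ (4π/3)·(S + 1)·‖ν‖_{L^∞(W − j)}·ε³. -/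
open MeasureTheory ProbabilityTheory ENNReal Pointwise

noncomputable section

/-- `δ₀(ω) = inf_{k ≠ 0} |r₀(ω) − k − r_k(ω)|`, with values in `[0,∞]`. -/
def delta0 {Ω : Type*} (r : (Fin 3 → ℤ) → Ω → E3) (ω : Ω) : ℝ≥0∞ :=
  ⨅ k : {k : Fin 3 → ℤ // k ≠ 0},
    edist (r 0 ω) (latt (k : Fin 3 → ℤ) + r (k : Fin 3 → ℤ) ω)

/-! ### Auxiliary lemmas -/

lemma vol_ball_E3 (x : E3) (ε : ℝ) (hε : 0 ≤ ε) :
    volume (Metric.ball x ε) = ENNReal.ofReal (4 * Real.pi / 3) * ENNReal.ofReal (ε ^ 3) := by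
  rw [EuclideanSpace.volume_ball]
  have hcard : Fintype.card (Fin 3) = 3 := by simp
  rw [hcard]
  have hΓ : Real.Gamma ((3:ℝ) / 2 + 1) = 3 / 4 * Real.sqrt Real.pi := by
    rw [Real.Gamma_add_one (by norm_num)]
    have : (3:ℝ)/2 = 1/2 + 1 := by norm_num
    rw [this, Real.Gamma_add_one (by norm_num), Real.Gamma_one_half_eq]
    ring
  have hπ : 0 < Real.sqrt Real.pi := Real.sqrt_pos.mpr Real.pi_pos
  have : Real.sqrt Real.pi ^ 3 / Real.Gamma ((3:ℝ)/2 + 1) = 4 * Real.pi / 3 := by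
    rw [hΓ]
    have h2 : Real.sqrt Real.pi ^ 2 = Real.pi := Real.sq_sqrt Real.pi_pos.le
    field_simp
    ring_nf
    nlinarith [h2]
  rw [show ((3:ℕ):ℝ) = (3:ℝ) by norm_num] at *
  rw [this, ← ENNReal.ofReal_pow hε, mul_comm]

lemma densBound_spec (ν : Measure E3) (A : Set E3) (hfin : densBound ν A ≠ ⊤)
    (B : Set E3) (hBA : B ⊆ A) (hB : MeasurableSet B) (hvol : volume B ≠ ⊤) :
    ν B ≤ densBound ν A * volume B := by
  set T := {M : ℝ≥0∞ | ∀ B : Set E3, B ⊆ A → MeasurableSet B → ν B ≤ M * volume B} with hT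
  have hne : T.Nonempty := by
    by_contra h
    rw [Set.not_nonempty_iff_eq_empty] at h
    exact hfin (by simp [densBound, ← hT, h])
  have : Nonempty T := hne.to_subtype
  have h1 : densBound ν A * volume B = ⨅ M : T, (M : ℝ≥0∞) * volume B := by
    rw [densBound, ← hT, sInf_eq_iInf']
    exact ENNReal.iInf_mul (by simp [hvol])
  rw [h1]
  exact le_iInf fun M => M.2 B hBA hB

lemma measurable_Wcube : MeasurableSet Wcube := by
  have : Wcube = ⋂ i, (fun x : E3 => x i) ⁻¹' Set.Ico (-(1:ℝ)/2) (1/2) := by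
    ext x; simp [Wcube, Set.mem_Ico]
  rw [this]
  exact MeasurableSet.iInter fun i => ((measurable_pi_apply i).comp (WithLp.measurable_ofLp 2 (Fin 3 → ℝ))) measurableSet_Ico

lemma volume_Wcube : volume Wcube = 1 := by
  have h : Wcube = (MeasurableEquiv.toLp 2 (Fin 3 → ℝ)).symm ⁻¹'
      (Set.pi Set.univ fun _ => Set.Ico (-(1:ℝ)/2) (1/2)) := by
    ext x; simp [Wcube, MeasurableEquiv.coe_toLp_symm, Set.mem_Ico]
  rw [h, (EuclideanSpace.volume_preserving_symm_measurableEquiv_toLp (Fin 3)).measure_preimage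
    (MeasurableSet.univ_pi fun _ => measurableSet_Ico).nullMeasurableSet, volume_pi_pi]
  norm_num

lemma volume_Wcube_shift (j : Fin 3 → ℤ) : volume ((fun x => x + latt j) ⁻¹' Wcube) = 1 := by
  rw [measure_preimage_add_right, volume_Wcube]

lemma measurable_Wcube_shift (j : Fin 3 → ℤ) :
    MeasurableSet ((fun x => x + latt j) ⁻¹' Wcube) :=
  measurable_Wcube.preimage (measurable_add_const _)

lemma latt_add (j k : Fin 3 → ℤ) : latt (j + k) = latt j + latt k := by
  simp only [latt]
  rw [← map_add]
  congr 1
  ext i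
  simp

lemma latt_zero : latt 0 = 0 := by
  simp only [latt]
  have : (fun i : Fin 3 => (((0 : Fin 3 → ℤ) i : ℝ))) = 0 := by ext i; simp
  rw [this, map_zero]

lemma ballEq (x : E3) (k : Fin 3 → ℤ) (ε : ℝ) :
    {y : E3 | edist x (latt k + y) < ENNReal.ofReal ε} = Metric.ball (x - latt k) ε := by
  ext y
  simp only [Set.mem_setOf_eq, Metric.mem_ball, edist_lt_ofReal]
  have : dist x (latt k + y) = dist y (x - latt k) := by
    rw [dist_comm, dist_eq_norm, dist_eq_norm]; congr 1; abel
  rw [this]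

lemma measurable_C (A : Set E3) (hA : MeasurableSet A) (k : Fin 3 → ℤ) (c : ℝ≥0∞) :
    MeasurableSet {p : E3 × E3 | p.1 ∈ A ∧ edist p.1 (latt k + p.2) < c} := by
  have hf : Continuous fun p : E3 × E3 => edist p.1 (latt k + p.2) :=
    continuous_edist.comp (continuous_fst.prodMk (continuous_const.add continuous_snd))
  have : {p : E3 × E3 | p.1 ∈ A ∧ edist p.1 (latt k + p.2) < c}
      = (A ×ˢ Set.univ) ∩ (fun p : E3 × E3 => edist p.1 (latt k + p.2)) ⁻¹' Set.Iio c := by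
    ext p; simp [Set.mem_prod]
  rw [this]
  exact (hA.prod MeasurableSet.univ).inter (hf.measurable measurableSet_Iio)

/-- Conditioning on the first coordinate. -/
lemma step_fst (ν : Measure E3) [IsProbabilityMeasure ν] (A T : Set E3)
    (hA : MeasurableSet A) (hT : densBound ν T ≠ ⊤)
    (k : Fin 3 → ℤ) (ε : ℝ)
    (hgeom : ∀ x ∈ A, Metric.ball (x - latt k) ε ⊆ T) :
    (ν.prod ν) {p : E3 × E3 | p.1 ∈ A ∧ edist p.1 (latt k + p.2) < ENNReal.ofReal ε}
      ≤ densBound ν T * volume (Metric.ball (0 : E3) ε) * ν A := by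
  rw [Measure.prod_apply (measurable_C A hA k _)]
  have hbd : ∀ x, ν (Prod.mk x ⁻¹' {p : E3 × E3 | p.1 ∈ A ∧ edist p.1 (latt k + p.2) < ENNReal.ofReal ε})
      ≤ A.indicator (fun _ => densBound ν T * volume (Metric.ball (0 : E3) ε)) x := by
    intro x
    by_cases hx : x ∈ A
    · rw [Set.indicator_of_mem hx]
      have : Prod.mk x ⁻¹' {p : E3 × E3 | p.1 ∈ A ∧ edist p.1 (latt k + p.2) < ENNReal.ofReal ε}
          = Metric.ball (x - latt k) ε := by
        rw [← ballEq x k ε]; ext y; simp [hx]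
      rw [this]
      refine le_trans (densBound_spec ν T hT _ (hgeom x hx) Metric.isOpen_ball.measurableSet
        (ne_of_lt (Metric.isBounded_ball.measure_lt_top))) ?_
      rw [Measure.addHaar_ball_center]
    · rw [Set.indicator_of_notMem hx]
      have : Prod.mk x ⁻¹' {p : E3 × E3 | p.1 ∈ A ∧ edist p.1 (latt k + p.2) < ENNReal.ofReal ε} = ∅ := by
        ext y; simp [hx]
      rw [this, measure_empty]
  refine le_trans (lintegral_mono hbd) ?_
  rw [lintegral_indicator_const hA]

/-- Conditioning on the second coordinate. -/
lemma step_snd (ν : Measure E3) [IsProbabilityMeasure ν] (A : Set E3)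
    (hA : MeasurableSet A) (hT : densBound ν A ≠ ⊤)
    (k : Fin 3 → ℤ) (ε : ℝ) :
    (ν.prod ν) {p : E3 × E3 | p.1 ∈ A ∧ edist p.1 (latt k + p.2) < ENNReal.ofReal ε}
      ≤ densBound ν A * volume (Metric.ball (0 : E3) ε) := by
  rw [Measure.prod_apply_symm (measurable_C A hA k _)]
  have hbd : ∀ y, ν ((fun x => (x, y)) ⁻¹' {p : E3 × E3 | p.1 ∈ A ∧ edist p.1 (latt k + p.2) < ENNReal.ofReal ε})
      ≤ densBound ν A * volume (Metric.ball (0 : E3) ε) := by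
    intro y
    have hsub : ((fun x => (x, y)) ⁻¹' {p : E3 × E3 | p.1 ∈ A ∧ edist p.1 (latt k + p.2) < ENNReal.ofReal ε})
        = A ∩ Metric.ball (latt k + y) ε := by
      ext x
      simp only [Set.mem_preimage, Set.mem_setOf_eq, Set.mem_inter_iff, Metric.mem_ball,
        edist_lt_ofReal, dist_comm (latt k + y) x]
    rw [hsub]
    refine le_trans (densBound_spec ν A hT _ Set.inter_subset_left
      (hA.inter Metric.isOpen_ball.measurableSet)
      (ne_of_lt (lt_of_le_of_lt (measure_mono Set.inter_subset_right)
        Metric.isBounded_ball.measure_lt_top))) ?_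
    refine mul_le_mul_right ?_ _
    refine le_trans (measure_mono Set.inter_subset_right) ?_
    rw [Measure.addHaar_ball_center]
  calc ∫⁻ y, ν ((fun x => (x, y)) ⁻¹' _) ∂ν ≤ ∫⁻ _, densBound ν A * volume (Metric.ball (0:E3) ε) ∂ν :=
        lintegral_mono hbd
    _ = densBound ν A * volume (Metric.ball (0:E3) ε) := by simp

/-- Geometry: balls around points of the shifted cube land in the inflated cube. -/
lemma geom_lemma (j k : Fin 3 → ℤ) (x : E3) (hx : x + latt j ∈ Wcube) (ε η : ℝ) (hεη : ε ≤ η) :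
    Metric.ball (x - latt k) ε ⊆
      (fun z => z + latt (j + k)) ⁻¹' (Wcube + Metric.ball (0 : E3) η) := by
  intro y hy
  rw [Set.mem_preimage, Set.mem_add]
  refine ⟨x + latt j, hx, y + latt (j + k) - (x + latt j), ?_, by abel⟩
  rw [mem_ball_zero_iff]
  have : y + latt (j + k) - (x + latt j) = y - (x - latt k) := by
    rw [latt_add]; abel
  rw [this, ← dist_eq_norm]
  exact lt_of_lt_of_le (Metric.mem_ball.mp hy) hεη

/-- If the `r_j` are independent with common law `ν` and
`S = Σ_{k ≠ 0} ‖ν‖_{L^∞(W + B_η − k)} < ∞` for some `η > 0`, then for every `j ∈ ℤ³` and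
every `0 < ε < η`:
(i) if `j = 0`, `P(r₀ ∈ W and δ₀ < ε) ≤ (4π/3)·S·ν(W)·ε³`;
(ii) if `j ≠ 0`, `P(r₀ ∈ W − j and δ₀ < ε) ≤ (4π/3)·(S+1)·‖ν‖_{L^∞(W−j)}·ε³`. -/
theorem prob_small_delta0_bound
    (ν : Measure E3) [IsProbabilityMeasure ν]
    {Ω : Type*} [MeasurableSpace Ω] (P : Measure Ω) [IsProbabilityMeasure P]
    (r : (Fin 3 → ℤ) → Ω → E3) (hmeas : ∀ j, Measurable (r j))
    (hindep : iIndepFun r P)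
    (hlaw : ∀ j, P.map (r j) = ν)
    (η : ℝ) (hη : 0 < η)
    (S : ℝ≥0∞)
    (hS : S = ∑' k : {k : Fin 3 → ℤ // k ≠ 0},
        densBound ν ((fun x => x + latt (k : Fin 3 → ℤ)) ⁻¹' (Wcube + Metric.ball (0 : E3) η)))
    (hSfin : S < ⊤)
    (j : Fin 3 → ℤ) (ε : ℝ) (hε : 0 < ε) (hεη : ε < η) :
    (j = 0 →
      P {ω | r 0 ω ∈ Wcube ∧ delta0 r ω < ENNReal.ofReal ε}
        ≤ ENNReal.ofReal (4 * Real.pi / 3) * S * ν Wcube * ENNReal.ofReal (ε ^ 3)) ∧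
    (j ≠ 0 →
      P {ω | r 0 ω + latt j ∈ Wcube ∧ delta0 r ω < ENNReal.ofReal ε}
        ≤ ENNReal.ofReal (4 * Real.pi / 3) * (S + 1)
            * densBound ν ((fun x => x + latt j) ⁻¹' Wcube) * ENNReal.ofReal (ε ^ 3)) := by
  -- notation
  set volB := volume (Metric.ball (0 : E3) ε) with hvolB
  have hvolB_eq : volB = ENNReal.ofReal (4 * Real.pi / 3) * ENNReal.ofReal (ε ^ 3) :=
    vol_ball_E3 _ _ hε.le
  set Dfun : (Fin 3 → ℤ) → ℝ≥0∞ := fun m =>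
    densBound ν ((fun x => x + latt m) ⁻¹' (Wcube + Metric.ball (0 : E3) η)) with hDfun
  have hTmeas : ∀ m : Fin 3 → ℤ,
      MeasurableSet ((fun x => x + latt m) ⁻¹' (Wcube + Metric.ball (0 : E3) η)) := by
    intro m
    have : IsOpen (Wcube + Metric.ball (0 : E3) η) := Metric.isOpen_ball.add_left
    exact (this.preimage (continuous_add_right _)).measurableSet
  -- each D m for m ≠ 0 is at most S, hence finite
  have hDle : ∀ m : {k : Fin 3 → ℤ // k ≠ 0}, Dfun m ≤ S := by
    intro m; rw [hS]; exact ENNReal.le_tsum m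
  -- law of the pair
  have hpair : ∀ k : Fin 3 → ℤ, k ≠ 0 → P.map (fun ω => (r 0 ω, r k ω)) = ν.prod ν := by
    intro k hk
    have h := hindep.indepFun (Ne.symm hk)
    rw [indepFun_iff_map_prod_eq_prod_map_map (hmeas 0).aemeasurable (hmeas k).aemeasurable] at h
    rw [h, hlaw, hlaw]
  -- union bound reduction
  have hmain : ∀ A : Set E3, MeasurableSet A →
      P {ω | r 0 ω ∈ A ∧ delta0 r ω < ENNReal.ofReal ε}
        ≤ ∑' k : {k : Fin 3 → ℤ // k ≠ 0},
            (ν.prod ν) {p : E3 × E3 | p.1 ∈ A ∧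
              edist p.1 (latt (k : Fin 3 → ℤ) + p.2) < ENNReal.ofReal ε} := by
    intro A hA
    have hsub : {ω | r 0 ω ∈ A ∧ delta0 r ω < ENNReal.ofReal ε}
        ⊆ ⋃ k : {k : Fin 3 → ℤ // k ≠ 0},
            (fun ω => (r 0 ω, r (k : Fin 3 → ℤ) ω)) ⁻¹'
              {p : E3 × E3 | p.1 ∈ A ∧ edist p.1 (latt (k : Fin 3 → ℤ) + p.2) < ENNReal.ofReal ε} := by
      intro ω hω
      obtain ⟨h1, h2⟩ := hω
      rw [delta0, iInf_lt_iff] at h2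
      obtain ⟨k, hk⟩ := h2
      exact Set.mem_iUnion.mpr ⟨k, h1, hk⟩
    refine le_trans (measure_mono hsub) (le_trans (measure_iUnion_le _) ?_)
    refine ENNReal.tsum_le_tsum fun k => ?_
    rw [← Measure.map_apply ((hmeas 0).prodMk (hmeas k)) (measurable_C A hA _ _),
      hpair k k.2]
  constructor
  · -- case j = 0
    intro _
    refine le_trans (hmain Wcube measurable_Wcube) ?_
    have hterm : ∀ k : {k : Fin 3 → ℤ // k ≠ 0},
        (ν.prod ν) {p : E3 × E3 | p.1 ∈ Wcube ∧
            edist p.1 (latt (k : Fin 3 → ℤ) + p.2) < ENNReal.ofReal ε}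
          ≤ Dfun k * (volB * ν Wcube) := by
      intro k
      rw [← mul_assoc]
      refine step_fst ν Wcube _ measurable_Wcube (by exact ne_top_of_le_ne_top hSfin.ne (hDle k)) _ ε ?_
      intro x hx
      have hx0 : x + latt 0 ∈ Wcube := by rwa [latt_zero, add_zero]
      have := geom_lemma 0 k x hx0 ε η hεη.le
      rwa [zero_add] at this
    refine le_trans (ENNReal.tsum_le_tsum hterm) ?_
    rw [ENNReal.tsum_mul_right, ← hS, hvolB_eq]
    apply le_of_eq
    ring
  · -- case j ≠ 0
    intro hj
    set Aj := (fun x => x + latt j) ⁻¹' Wcube with hAj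
    set D := densBound ν Aj with hD
    by_cases hDtop : D = ⊤
    · -- right-hand side is infinite
      have h1 : ENNReal.ofReal (4 * Real.pi / 3) ≠ 0 :=
        (ENNReal.ofReal_pos.mpr (by positivity)).ne'
      have h2 : ENNReal.ofReal (ε ^ 3) ≠ 0 := (ENNReal.ofReal_pos.mpr (by positivity)).ne'
      have h3 : S + 1 ≠ 0 := by simp
      have : ENNReal.ofReal (4 * Real.pi / 3) * (S + 1) * D * ENNReal.ofReal (ε ^ 3) = ⊤ := by
        rw [hDtop, ENNReal.mul_top (mul_ne_zero h1 h3), ENNReal.top_mul h2]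
      rw [this]
      exact le_top
    · have hevent : {ω | r 0 ω + latt j ∈ Wcube ∧ delta0 r ω < ENNReal.ofReal ε}
          = {ω | r 0 ω ∈ Aj ∧ delta0 r ω < ENNReal.ofReal ε} := rfl
      rw [hevent]
      refine le_trans (hmain Aj (measurable_Wcube_shift j)) ?_
      -- the special index -j
      have hjne : (-j : Fin 3 → ℤ) ≠ 0 := by simpa using hj
      set b : {k : Fin 3 → ℤ // k ≠ 0} := ⟨-j, hjne⟩ with hb
      have hνAj : ν Aj ≤ D := by
        refine le_trans (densBound_spec ν Aj hDtop Aj subset_rfl (measurable_Wcube_shift j)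
          (by rw [volume_Wcube_shift]; exact one_ne_top)) ?_
        rw [volume_Wcube_shift, mul_one]
      have hterm : ∀ k : {k : Fin 3 → ℤ // k ≠ 0},
          (ν.prod ν) {p : E3 × E3 | p.1 ∈ Aj ∧
              edist p.1 (latt (k : Fin 3 → ℤ) + p.2) < ENNReal.ofReal ε}
            ≤ if k = b then D * volB else Dfun (j + (k : Fin 3 → ℤ)) * (volB * D) := by
        intro k
        by_cases hkb : k = b
        · rw [if_pos hkb]
          exact step_snd ν Aj (measurable_Wcube_shift j) hDtop _ ε
        · rw [if_neg hkb]
          have hjk : j + (k : Fin 3 → ℤ) ≠ 0 := by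
            intro h
            exact hkb (Subtype.ext ((neg_eq_of_add_eq_zero_right h).symm))
          have hfin : Dfun (j + (k : Fin 3 → ℤ)) ≠ ⊤ :=
            ne_top_of_le_ne_top hSfin.ne (hDle ⟨j + k, hjk⟩)
          have hstep := step_fst ν Aj _ (measurable_Wcube_shift j) hfin k ε
            (fun x hx => geom_lemma j k x hx ε η hεη.le)
          refine le_trans hstep ?_
          calc Dfun (j + (k : Fin 3 → ℤ)) * volB * ν Aj
              ≤ Dfun (j + (k : Fin 3 → ℤ)) * volB * D := by
                exact mul_le_mul_right hνAj _
            _ = Dfun (j + (k : Fin 3 → ℤ)) * (volB * D) := by ring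
      refine le_trans (ENNReal.tsum_le_tsum hterm) ?_
      -- evaluate the sum
      rw [Summable.tsum_eq_add_tsum_ite' b ENNReal.summable]
      have hrest : ∑' k : {k : Fin 3 → ℤ // k ≠ 0},
          (if k = b then (0:ℝ≥0∞) else if k = b then D * volB
            else Dfun (j + (k : Fin 3 → ℤ)) * (volB * D))
          ≤ S * (volB * D) := by
        have heq : ∀ k : {k : Fin 3 → ℤ // k ≠ 0},
            (if k = b then (0:ℝ≥0∞) else if k = b then D * volB
              else Dfun (j + (k : Fin 3 → ℤ)) * (volB * D))
            = (if k = b then 0 else Dfun (j + (k : Fin 3 → ℤ))) * (volB * D) := by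
          intro k; by_cases hkb : k = b <;> simp [hkb]
        rw [tsum_congr heq, ENNReal.tsum_mul_right]
        refine mul_le_mul_left ?_ _
        -- compare with S via an indicator sum over all of ℤ³
        set F : (Fin 3 → ℤ) → ℝ≥0∞ := fun m => if m = 0 then 0 else Dfun m with hF
        have hSF : S = ∑' m : Fin 3 → ℤ, F m := by
          rw [hS, ← tsum_subtype_eq_of_support_subset (s := {m : Fin 3 → ℤ | m ≠ 0}) (f := F) ?_]
          · exact tsum_congr fun m => by
              simp only [hF]
              rw [if_neg m.2]
          · intro m hm
            simp only [hF, Function.mem_support] at hm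
            by_contra h
            simp only [Set.mem_setOf_eq, not_not] at h
            exact hm (by rw [if_pos h])
        have hle : ∀ k : {k : Fin 3 → ℤ // k ≠ 0},
            (if k = b then (0:ℝ≥0∞) else Dfun (j + (k : Fin 3 → ℤ))) ≤ F (j + (k : Fin 3 → ℤ)) := by
          intro k
          by_cases hkb : k = b
          · simp [hkb]
          · have hjk : j + (k : Fin 3 → ℤ) ≠ 0 := by
              intro h
              exact hkb (Subtype.ext ((neg_eq_of_add_eq_zero_right h).symm))
            rw [if_neg hkb]
            exact le_of_eq (by simp [hF, hjk])
        refine le_trans (ENNReal.tsum_le_tsum hle) ?_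
        have hinj : Function.Injective
            (fun k : {k : Fin 3 → ℤ // k ≠ 0} => j + (k : Fin 3 → ℤ)) := by
          intro a b hab
          apply Subtype.ext
          simpa using hab
        refine le_trans (ENNReal.tsum_comp_le_tsum_of_injective hinj _) ?_
        rw [hSF]
      refine le_trans (add_le_add_right hrest _) ?_
      simp only [↓reduceIte]
      rw [hvolB_eq]
      apply le_of_eq
      ring
end
end

section
/- For every integer N ≥ 1, all pairwise distinct points y₁, …, y_N ∈ ℝ³ and all real numbers q₁, …, q_N, one has Σ_{1 ≤ i, j ≤ N, i ≠ j} q_i q_j · (1 − e^{−|y_i − y_j|}) / |y_i − y_j| ≥ − Σ_{i=1}^N q_i². Equivalently, replacing the Coulomb potential 1/|x| by the Yukawa potential e^{−|x|}/|x| in the pairwise interaction of N point charges lowers the total interaction energy by at most Σ_i q_i². -/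
open Real MeasureTheory RealInnerProductSpace
open scoped Nat

noncomputable section

namespace CYAux

/-- PSD of the `min` kernel on nonnegative reals. -/
lemma sum_min_nonneg {N : ℕ} (x q : Fin N → ℝ) (hx : ∀ i, 0 ≤ x i) :
    0 ≤ ∑ i, ∑ j, q i * q j * min (x i) (x j) := by
  classical
  set F : Fin N → ℝ → ℝ := fun i s => (Set.Ioc (0:ℝ) (x i)).indicator 1 s with hF
  have hprodfun : ∀ i j, (fun s => (q i * F i s) * (q j * F j s))
      = fun s => (q i * q j) * (Set.Ioc (0:ℝ) (min (x i) (x j))).indicator 1 s := by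
    intro i j
    funext s
    have h1 : (Set.Ioc (0:ℝ) (min (x i) (x j))).indicator (1 : ℝ → ℝ) s
        = F i s * F j s := by
      rw [hF]
      have : Set.Ioc (0:ℝ) (min (x i) (x j))
          = Set.Ioc (0:ℝ) (x i) ∩ Set.Ioc (0:ℝ) (x j) := by
        rw [Set.Ioc_inter_Ioc, max_self]
      rw [this, Set.inter_indicator_one]
      rfl
    rw [h1]; ring
  have hint : ∀ i j, Integrable
      (fun s => (q i * F i s) * (q j * F j s)) (volume : Measure ℝ) := by
    intro i j
    rw [hprodfun i j]
    exact (((integrable_indicator_iff measurableSet_Ioc).2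
      (integrableOn_const measure_Ioc_lt_top.ne))).const_mul _
  have hval : ∀ i j, ∫ s, (q i * F i s) * (q j * F j s)
      = q i * q j * min (x i) (x j) := by
    intro i j
    rw [hprodfun i j, integral_const_mul, integral_indicator_one measurableSet_Ioc,
      measureReal_def, Real.volume_Ioc, ENNReal.toReal_ofReal (by simp [le_min (hx i) (hx j)])]
    simp
  have h0 : 0 ≤ ∫ s, (∑ i, q i * F i s) ^ 2 :=
    integral_nonneg fun s => sq_nonneg _
  have hexpand : (fun s => (∑ i, q i * F i s) ^ 2)
      = fun s => ∑ i, ∑ j, (q i * F i s) * (q j * F j s) := by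
    funext s
    rw [sq, Finset.sum_mul_sum]
  rw [hexpand] at h0
  rw [integral_finset_sum _ (fun i _ => integrable_finset_sum _ (fun j _ => hint i j))] at h0
  calc (0:ℝ) ≤ ∑ i, ∫ s, ∑ j, (q i * F i s) * (q j * F j s) := h0
    _ = ∑ i, ∑ j, q i * q j * min (x i) (x j) := by
        refine Finset.sum_congr rfl fun i _ => ?_
        rw [integral_finset_sum _ (fun j _ => hint i j)]
        exact Finset.sum_congr rfl fun j _ => hval i j

lemma abs_decomp (a b : ℝ) :
    |a| + |b| - |a - b|
      = 2 * min (max a 0) (max b 0) + 2 * min (max (-a) 0) (max (-b) 0) := by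
  rcases le_total 0 a with ha | ha <;> rcases le_total 0 b with hb | hb <;>
    rcases le_total a b with hab | hab <;>
      simp [abs_of_nonneg, abs_of_nonpos, max_eq_left, max_eq_right, min_def,
        sub_nonneg, sub_nonpos, *] <;>
      linarith

/-- the 1-D negative-type inequality. -/
lemma sum_abs_form_nonneg {N : ℕ} (a q : Fin N → ℝ) :
    0 ≤ ∑ i, ∑ j, q i * q j * (|a i| + |a j| - |a i - a j|) := by
  have h : ∀ i j, q i * q j * (|a i| + |a j| - |a i - a j|)
      = 2 * (q i * q j * min (max (a i) 0) (max (a j) 0))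
        + 2 * (q i * q j * min (max (-a i) 0) (max (-a j) 0)) := by
    intro i j; rw [abs_decomp]; ring
  simp_rw [h, Finset.sum_add_distrib, ← Finset.mul_sum]
  have h1 := sum_min_nonneg (fun i => max (a i) 0) q (fun i => le_max_right _ _)
  have h2 := sum_min_nonneg (fun i => max (-a i) 0) q (fun i => le_max_right _ _)
  positivity



/-- unit vector `e₁`. -/
def e1 : E3 := EuclideanSpace.single (0 : Fin 3) (1:ℝ)

lemma norm_e1 : ‖e1‖ = 1 := by
  rw [e1, EuclideanSpace.norm_single]; norm_num

/-- Gaussian weight. -/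
def w (k : E3) : ℝ := rexp (-‖k‖ ^ 2)

lemma integrable_gauss_half : Integrable (fun k : E3 => rexp (-(2⁻¹ : ℝ) * ‖k‖ ^ 2)) := by
  have h := (GaussianFourier.integrable_cexp_neg_mul_sq_norm_add (V := E3)
    (b := (2⁻¹ : ℂ)) (by norm_num) 0 0).norm
  refine h.congr ?_
  filter_upwards with k
  simp [Complex.norm_exp, ← Complex.ofReal_pow]

lemma integrable_w_inner (z : E3) :
    Integrable (fun k : E3 => w k * |⟪k, z⟫|) := by
  have hg : Integrable (fun k : E3 => ‖z‖ * rexp (-(2⁻¹:ℝ) * ‖k‖ ^ 2)) :=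
    integrable_gauss_half.const_mul _
  have hc : Continuous fun k : E3 => w k * |⟪k, z⟫| := by
    unfold w
    exact (Real.continuous_exp.comp (continuous_norm.pow 2).neg).mul
      ((continuous_id.inner continuous_const).abs)
  refine hg.mono' hc.aestronglyMeasurable ?_
  filter_upwards with k
  have h1 : |⟪k, z⟫| ≤ ‖k‖ * ‖z‖ := abs_real_inner_le_norm k z
  have h2 : ‖k‖ * rexp (-‖k‖ ^ 2) ≤ rexp (-(2⁻¹:ℝ) * ‖k‖ ^ 2) := by
    set u := ‖k‖ with hu
    have hu0 : 0 ≤ u := norm_nonneg k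
    have hsplit : rexp (-u ^ 2) = rexp (-(2⁻¹:ℝ) * u ^ 2) * rexp (-(2⁻¹:ℝ) * u ^ 2) := by
      rw [← Real.exp_add]; ring_nf
    have hb : u * rexp (-(2⁻¹:ℝ) * u ^ 2) ≤ 1 := by
      have hue : u ≤ rexp ((2⁻¹:ℝ) * u ^ 2) := by
        have h1 : u ≤ (2⁻¹:ℝ) * u ^ 2 + 1 := by nlinarith [sq_nonneg (u - 1)]
        have h2 := Real.add_one_le_exp ((2⁻¹:ℝ) * u ^ 2)
        linarith
      have h3 := mul_le_mul_of_nonneg_right hue (Real.exp_pos (-(2⁻¹:ℝ) * u ^ 2)).le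
      rwa [← Real.exp_add, (by ring : (2⁻¹:ℝ) * u ^ 2 + -(2⁻¹:ℝ) * u ^ 2 = 0),
        Real.exp_zero] at h3
    calc u * rexp (-u ^ 2)
        = (u * rexp (-(2⁻¹:ℝ) * u ^ 2)) * rexp (-(2⁻¹:ℝ) * u ^ 2) := by rw [hsplit]; ring
      _ ≤ 1 * rexp (-(2⁻¹:ℝ) * u ^ 2) := by
          exact mul_le_mul_of_nonneg_right hb (Real.exp_pos _).le
      _ = rexp (-(2⁻¹:ℝ) * u ^ 2) := one_mul _
  have hwnn : 0 ≤ w k := (Real.exp_pos _).le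
  have : ‖w k * |⟪k, z⟫|‖ = w k * |⟪k, z⟫| := by
    rw [Real.norm_eq_abs, abs_of_nonneg (mul_nonneg hwnn (abs_nonneg _))]
  rw [this]
  calc w k * |⟪k, z⟫| ≤ w k * (‖k‖ * ‖z‖) := by
        exact mul_le_mul_of_nonneg_left h1 hwnn
    _ = ‖z‖ * (‖k‖ * rexp (-‖k‖ ^ 2)) := by rw [w]; ring
    _ ≤ ‖z‖ * rexp (-(2⁻¹:ℝ) * ‖k‖ ^ 2) :=
        mul_le_mul_of_nonneg_left h2 (norm_nonneg z)

/-- the normalizing constant. -/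
def Cns : ℝ := ∫ k : E3, w k * |⟪k, e1⟫|

lemma J_eq (z : E3) : (∫ k : E3, w k * |⟪k, z⟫|) = Cns * ‖z‖ := by
  rcases eq_or_ne z 0 with rfl | hz
  · simp
  · set u : E3 := ‖z‖⁻¹ • z with hu
    have hun : ‖u‖ = 1 := norm_smul_inv_norm hz
    set A : E3 ≃ₗᵢ[ℝ] E3 := Submodule.reflection (ℝ ∙ (e1 - u))ᗮ with hA
    have hAe : A e1 = u := Submodule.reflection_sub (norm_e1.trans hun.symm)
    have hmp : MeasurePreserving A := A.measurePreserving
    have hcomp := hmp.integral_comp A.toHomeomorph.measurableEmbedding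
      (fun k => w k * |⟪k, z⟫|)
    have hz' : A (‖z‖ • e1) = z := by
      rw [_root_.map_smul, hAe, hu, smul_smul, mul_inv_cancel₀ (norm_ne_zero_iff.2 hz), one_smul]
    have hptw : ∀ k : E3, w (A k) * |⟪A k, z⟫| = ‖z‖ * (w k * |⟪k, e1⟫|) := by
      intro k
      have h1 : w (A k) = w k := by rw [w, w, A.norm_map]
      have h2 : ⟪A k, z⟫ = ‖z‖ * ⟪k, e1⟫ := by
        conv_lhs => rw [← hz']
        rw [A.inner_map_map, real_inner_smul_right]
      rw [h1, h2, abs_mul, abs_of_nonneg (norm_nonneg z)]; ring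
    calc (∫ k : E3, w k * |⟪k, z⟫|) = ∫ k : E3, w (A k) * |⟪A k, z⟫| := hcomp.symm
      _ = ∫ k : E3, ‖z‖ * (w k * |⟪k, e1⟫|) := by simp_rw [hptw]
      _ = ‖z‖ * Cns := by rw [integral_const_mul, Cns]
      _ = Cns * ‖z‖ := mul_comm _ _

lemma Cns_pos : 0 < Cns := by
  have hint := integrable_w_inner e1
  set s : Set E3 := Metric.ball e1 2⁻¹ with hs
  have hlb : ∀ k ∈ s, (2⁻¹ : ℝ) * rexp (-(9/4 : ℝ)) ≤ w k * |⟪k, e1⟫| := by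
    intro k hk
    rw [hs, Metric.mem_ball, dist_eq_norm] at hk
    have h1 : |⟪k - e1, e1⟫| ≤ ‖k - e1‖ := by
      calc |⟪k - e1, e1⟫| ≤ ‖k - e1‖ * ‖e1‖ := abs_real_inner_le_norm _ _
        _ = ‖k - e1‖ := by rw [norm_e1, mul_one]
    have h2 : ⟪k, e1⟫ = ⟪k - e1, e1⟫ + 1 := by
      rw [inner_sub_left]
      have : ⟪e1, e1⟫ = (1:ℝ) := by
        rw [real_inner_self_eq_norm_sq, norm_e1]; norm_num
      rw [this]; ring
    have hin : (2⁻¹ : ℝ) ≤ |⟪k, e1⟫| := by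
      rw [h2]
      have := abs_le.1 (h1.trans hk.le)
      rw [abs_of_nonneg (by linarith)]
      linarith
    have hnk : ‖k‖ ≤ 3/2 := by
      calc ‖k‖ = ‖e1 + (k - e1)‖ := by rw [show e1 + (k - e1) = k from by abel]
        _ ≤ ‖e1‖ + ‖k - e1‖ := norm_add_le _ _
        _ ≤ 1 + 2⁻¹ := by rw [norm_e1]; linarith
        _ = 3/2 := by norm_num
    have hw : rexp (-(9/4 : ℝ)) ≤ w k := by
      rw [w]
      apply Real.exp_le_exp.2
      nlinarith [norm_nonneg k]
    calc (2⁻¹ : ℝ) * rexp (-(9/4 : ℝ)) ≤ |⟪k, e1⟫| * w k := by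
          apply mul_le_mul hin hw (Real.exp_pos _).le (abs_nonneg _)
      _ = w k * |⟪k, e1⟫| := mul_comm _ _
  have hsm : MeasurableSet s := measurableSet_ball
  have hsf : volume s ≠ ⊤ := measure_ball_lt_top.ne
  have h1 : (2⁻¹ : ℝ) * rexp (-(9/4 : ℝ)) * (volume s).toReal ≤ ∫ k in s, w k * |⟪k, e1⟫| :=
    setIntegral_ge_of_const_le_real hsm hsf hlb hint.integrableOn
  have h2 : (∫ k in s, w k * |⟪k, e1⟫|) ≤ Cns := by
    rw [Cns]
    exact setIntegral_le_integral hint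
      (Filter.Eventually.of_forall fun k => mul_nonneg (Real.exp_pos _).le (abs_nonneg _))
  have hvol : 0 < (volume s).toReal :=
    ENNReal.toReal_pos (Metric.measure_ball_pos volume e1 (by norm_num)).ne' hsf
  have : 0 < (2⁻¹ : ℝ) * rexp (-(9/4 : ℝ)) * (volume s).toReal := by positivity
  linarith



lemma formM_nonneg {N : ℕ} (y : Fin N → E3) (q : Fin N → ℝ) :
    0 ≤ ∑ i, ∑ j, q i * q j * (‖y i‖ + ‖y j‖ - ‖y i - y j‖) := by
  classical
  have hC := Cns_pos
  set S := ∑ i, ∑ j, q i * q j * (‖y i‖ + ‖y j‖ - ‖y i - y j‖) with hS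
  have hint : ∀ z : E3, Integrable (fun k : E3 => w k * |⟪k, z⟫|) := integrable_w_inner
  set g : Fin N → Fin N → E3 → ℝ := fun i j k =>
    q i * q j * (w k * |⟪k, y i⟫|) + q i * q j * (w k * |⟪k, y j⟫|)
      - q i * q j * (w k * |⟪k, y i - y j⟫|) with hg
  have hgint : ∀ i j, Integrable (g i j) := fun i j =>
    (((hint (y i)).const_mul _).add ((hint (y j)).const_mul _)).sub
      ((hint (y i - y j)).const_mul _)
  have hgval : ∀ i j, ∫ k, g i j k = Cns * (q i * q j * (‖y i‖ + ‖y j‖ - ‖y i - y j‖)) := by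
    intro i j
    have hi1 : Integrable (fun k : E3 => q i * q j * (w k * |⟪k, y i⟫|)) :=
      (hint (y i)).const_mul _
    have hi2 : Integrable (fun k : E3 => q i * q j * (w k * |⟪k, y j⟫|)) :=
      (hint (y j)).const_mul _
    have hi3 : Integrable (fun k : E3 => q i * q j * (w k * |⟪k, y i - y j⟫|)) :=
      (hint (y i - y j)).const_mul _
    have hi12 : Integrable (fun k : E3 =>
        q i * q j * (w k * |⟪k, y i⟫|) + q i * q j * (w k * |⟪k, y j⟫|)) := hi1.add hi2
    rw [hg]
    simp only
    rw [integral_sub hi12 hi3, integral_add hi1 hi2,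
      integral_const_mul, integral_const_mul, integral_const_mul,
      J_eq, J_eq, J_eq]
    ring
  have hCS : Cns * S = ∑ i, ∑ j, ∫ k, g i j k := by
    rw [hS, Finset.mul_sum]
    refine Finset.sum_congr rfl fun i _ => ?_
    rw [Finset.mul_sum]
    exact Finset.sum_congr rfl fun j _ => (hgval i j).symm
  have hswap : ∑ i, ∑ j, ∫ k, g i j k = ∫ k, ∑ i, ∑ j, g i j k := by
    rw [integral_finset_sum _ (fun i _ => integrable_finset_sum _ (fun j _ => hgint i j))]
    exact Finset.sum_congr rfl fun i _ =>
      (integral_finset_sum _ (fun j _ => hgint i j)).symm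
  have hptw : ∀ k : E3, 0 ≤ ∑ i, ∑ j, g i j k := by
    intro k
    have h1 := sum_abs_form_nonneg (fun i => ⟪k, y i⟫) q
    have h2 : ∑ i, ∑ j, g i j k
        = w k * ∑ i, ∑ j, q i * q j * (|⟪k, y i⟫| + |⟪k, y j⟫| - |⟪k, y i⟫ - ⟪k, y j⟫|) := by
      rw [Finset.mul_sum]
      refine Finset.sum_congr rfl fun i _ => ?_
      rw [Finset.mul_sum]
      refine Finset.sum_congr rfl fun j _ => ?_
      rw [hg]
      simp only
      rw [← inner_sub_right]
      ring
    rw [h2]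
    exact mul_nonneg (Real.exp_pos _).le h1
  have hfin : 0 ≤ Cns * S := by
    rw [hCS, hswap]
    exact integral_nonneg hptw
  nlinarith

lemma posSemidef_of {N : ℕ} (M : Matrix (Fin N) (Fin N) ℝ)
    (hsymm : ∀ i j, M i j = M j i)
    (hform : ∀ x : Fin N → ℝ, 0 ≤ ∑ i, ∑ j, x i * x j * M i j) : M.PosSemidef := by
  rw [Matrix.posSemidef_iff_dotProduct_mulVec]
  constructor
  · ext i j
    rw [Matrix.conjTranspose_apply, star_trivial]
    exact hsymm j i
  · intro x
    have h := hform x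
    have heq : dotProduct (star x) (M.mulVec x) = ∑ i, ∑ j, x i * x j * M i j := by
      simp only [dotProduct, Matrix.mulVec, Pi.star_apply, star_trivial]
      refine Finset.sum_congr rfl fun i _ => ?_
      rw [Finset.mul_sum]
      exact Finset.sum_congr rfl fun j _ => by ring
    show 0 ≤ dotProduct (star x) (M.mulVec x)
    rw [heq]
    exact h

lemma pow_form_nonneg {N : ℕ} (B : Matrix (Fin N) (Fin N) ℝ) :
    ∀ (n : ℕ) (q : Fin N → ℝ), 0 ≤ ∑ i, ∑ j, q i * q j * (∑ k, B k i * B k j) ^ n := by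
  intro n
  induction n with
  | zero =>
    intro q
    have h := sq_nonneg (∑ i, q i)
    rw [sq, Finset.sum_mul_sum] at h
    simpa using h
  | succ n ih =>
    intro q
    have step : ∀ i j : Fin N, q i * q j * (∑ k, B k i * B k j) ^ (n + 1)
        = ∑ k, (q i * B k i) * (q j * B k j) * (∑ m, B m i * B m j) ^ n := by
      intro i j
      rw [pow_succ, Finset.mul_sum, Finset.mul_sum]
      exact Finset.sum_congr rfl fun k _ => by ring
    simp_rw [step]
    have hsw : ∑ i, ∑ j, ∑ k, (q i * B k i) * (q j * B k j) * (∑ m, B m i * B m j) ^ n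
        = ∑ k, ∑ i, ∑ j, (q i * B k i) * (q j * B k j) * (∑ m, B m i * B m j) ^ n := by
      calc ∑ i, ∑ j, ∑ k, (q i * B k i) * (q j * B k j) * (∑ m, B m i * B m j) ^ n
          = ∑ i, ∑ k, ∑ j, (q i * B k i) * (q j * B k j) * (∑ m, B m i * B m j) ^ n :=
            Finset.sum_congr rfl fun i _ => Finset.sum_comm
        _ = ∑ k, ∑ i, ∑ j, (q i * B k i) * (q j * B k j) * (∑ m, B m i * B m j) ^ n :=
            Finset.sum_comm
    rw [hsw]
    exact Finset.sum_nonneg fun k _ => ih (fun i => q i * B k i)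

lemma exp_form_nonneg {N : ℕ} (G : Matrix (Fin N) (Fin N) ℝ) (hG : G.PosSemidef)
    (d q : Fin N → ℝ) :
    0 ≤ ∑ i, ∑ j, q i * q j * Real.exp (d i + d j + G i j) := by
  classical
  obtain ⟨B, hB⟩ : ∃ B : Matrix (Fin N) (Fin N) ℝ, G = B.conjTranspose * B := by
    open scoped MatrixOrder in
    obtain ⟨X, hX, -, hXX⟩ := CFC.exists_sqrt_of_isSelfAdjoint_of_quasispectrumRestricts
      hG.isHermitian (QuasispectrumRestricts.nnreal_of_nonneg hG.nonneg)
    refine ⟨X, ?_⟩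
    rw [← hXX, ← Matrix.star_eq_conjTranspose, hX.star_eq]
  have hent : ∀ i j, G i j = ∑ k, B k i * B k j := by
    intro i j
    rw [hB]
    rw [Matrix.mul_apply]
    exact Finset.sum_congr rfl fun k _ => by
      rw [Matrix.conjTranspose_apply, star_trivial]
  set c : Fin N → ℝ := fun i => q i * Real.exp (d i) with hc
  have hexp : ∀ i j : Fin N, q i * q j * Real.exp (d i + d j + G i j)
      = ∑' n : ℕ, c i * c j * ((G i j) ^ n / (n ! : ℝ)) := by
    intro i j
    have h1 : Real.exp (G i j) = ∑' n : ℕ, (G i j) ^ n / (n ! : ℝ) := by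
      rw [Real.exp_eq_exp_ℝ, NormedSpace.exp_eq_tsum_div]
    calc q i * q j * Real.exp (d i + d j + G i j)
        = c i * c j * ∑' n : ℕ, (G i j) ^ n / (n ! : ℝ) := by
          rw [Real.exp_add, Real.exp_add, h1, hc]; ring
      _ = ∑' n : ℕ, c i * c j * ((G i j) ^ n / (n ! : ℝ)) := tsum_mul_left.symm
  have hflat : ∑ i, ∑ j, q i * q j * Real.exp (d i + d j + G i j)
      = ∑ p : Fin N × Fin N, q p.1 * q p.2 * Real.exp (d p.1 + d p.2 + G p.1 p.2) :=
    (Fintype.sum_prod_type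
      (f := fun p : Fin N × Fin N => q p.1 * q p.2 * Real.exp (d p.1 + d p.2 + G p.1 p.2))).symm
  rw [hflat]
  have hform : ∀ p : Fin N × Fin N, q p.1 * q p.2 * Real.exp (d p.1 + d p.2 + G p.1 p.2)
      = ∑' n : ℕ, c p.1 * c p.2 * ((G p.1 p.2) ^ n / (n ! : ℝ)) := fun p => hexp p.1 p.2
  rw [Finset.sum_congr rfl (fun p _ => hform p)]
  have hsummable : ∀ p ∈ (Finset.univ : Finset (Fin N × Fin N)),
      Summable (fun n : ℕ => c p.1 * c p.2 * ((G p.1 p.2) ^ n / (n ! : ℝ))) :=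
    fun p _ => (Real.summable_pow_div_factorial _).mul_left _
  rw [← Summable.tsum_finsetSum hsummable]
  refine tsum_nonneg fun n => ?_
  have h1 : ∑ p : Fin N × Fin N, c p.1 * c p.2 * ((G p.1 p.2) ^ n / (n ! : ℝ))
      = (∑ i, ∑ j, c i * c j * (∑ k, B k i * B k j) ^ n) / (n ! : ℝ) := by
    rw [Fintype.sum_prod_type, Finset.sum_div]
    refine Finset.sum_congr rfl fun i _ => ?_
    rw [Finset.sum_div]
    refine Finset.sum_congr rfl fun j _ => ?_
    rw [← hent]
    ring
  rw [h1]
  exact div_nonneg (pow_form_nonneg B n c) (by positivity)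

lemma expdist_form_nonneg {N : ℕ} (y : Fin N → E3) (q : Fin N → ℝ) {t : ℝ} (ht : 0 ≤ t) :
    0 ≤ ∑ i, ∑ j, q i * q j * Real.exp (-(t * dist (y i) (y j))) := by
  classical
  set G : Matrix (Fin N) (Fin N) ℝ :=
    Matrix.of fun i j => t * (‖y i‖ + ‖y j‖ - ‖y i - y j‖) with hG
  have hGsd : G.PosSemidef := by
    refine posSemidef_of G (fun i j => ?_) (fun x => ?_)
    · rw [hG]
      simp only [Matrix.of_apply]
      rw [norm_sub_rev]
      ring
    · have h := formM_nonneg y x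
      have h2 : ∑ i, ∑ j, x i * x j * G i j
          = t * ∑ i, ∑ j, x i * x j * (‖y i‖ + ‖y j‖ - ‖y i - y j‖) := by
        rw [Finset.mul_sum]
        refine Finset.sum_congr rfl fun i _ => ?_
        rw [Finset.mul_sum]
        exact Finset.sum_congr rfl fun j _ => by rw [hG]; simp only [Matrix.of_apply]; ring
      rw [h2]
      exact mul_nonneg ht h
  have hptw : ∀ i j : Fin N, -(t * dist (y i) (y j))
      = (-(t * ‖y i‖)) + (-(t * ‖y j‖)) + G i j := by
    intro i j
    rw [dist_eq_norm, hG]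
    simp only [Matrix.of_apply]
    ring
  have := exp_form_nonneg G hGsd (fun i => -(t * ‖y i‖)) q
  simpa only [← hptw] using this



end CYAux

open CYAux in
/-- For pairwise distinct points `y₁, …, y_N ∈ ℝ³` and real charges
`q₁, …, q_N`, one has
`Σ_{i ≠ j} q_i q_j (1 − e^{−|y_i − y_j|})/|y_i − y_j| ≥ −Σ_i q_i²`:
replacing the Coulomb potential by the Yukawa potential lowers the total interaction
energy by at most `Σ_i q_i²`. -/
theorem coulomb_minus_yukawa_lower_bound
    (N : ℕ) (hN : 1 ≤ N) (y : Fin N → E3) (hy : Function.Injective y)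
    (q : Fin N → ℝ) :
    -∑ i, q i ^ 2
      ≤ ∑ i, ∑ j, (if i = j then 0 else
          q i * q j * (1 - Real.exp (-dist (y i) (y j))) / dist (y i) (y j)) := by
  classical
  set T : Fin N → Fin N → ℝ := fun i j => if i = j then q i ^ 2 else
    q i * q j * (1 - Real.exp (-dist (y i) (y j))) / dist (y i) (y j) with hT
  have hTint : ∀ i j, T i j
      = ∫ t in (0:ℝ)..1, q i * q j * rexp (-(t * dist (y i) (y j))) := by
    intro i j
    by_cases h : i = j
    · subst h
      simp only [hT, if_pos rfl, dist_self]
      simp [sq]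
    · have hne : y i ≠ y j := fun hh => h (hy hh)
      have hr : 0 < dist (y i) (y j) := dist_pos.2 hne
      set r := dist (y i) (y j) with hrr
      have hrne : r ≠ 0 := ne_of_gt hr
      have hint : (∫ t in (0:ℝ)..1, rexp (-(t * r))) = (1 - rexp (-r)) / r := by
        simp_rw [show ∀ t : ℝ, -(t * r) = (-r) * t from fun t => by ring]
        rw [intervalIntegral.integral_comp_mul_left (f := Real.exp) (neg_ne_zero.2 hrne)]
        rw [mul_zero, mul_one, integral_exp, Real.exp_zero]
        rw [smul_eq_mul, inv_neg, div_eq_mul_inv]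
        ring
      simp only [hT, if_neg h]
      rw [intervalIntegral.integral_const_mul, hint, mul_div_assoc]
  have hcont : ∀ i j, IntervalIntegrable
      (fun t => q i * q j * rexp (-(t * dist (y i) (y j)))) volume 0 1 := by
    intro i j
    apply Continuous.intervalIntegrable
    fun_prop
  have hsum : ∑ i, ∑ j, T i j
      = ∫ t in (0:ℝ)..1, ∑ i, ∑ j, q i * q j * rexp (-(t * dist (y i) (y j))) := by
    have hcont2 : ∀ i : Fin N, IntervalIntegrable
        (fun t => ∑ j, q i * q j * rexp (-(t * dist (y i) (y j)))) volume 0 1 := by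
      intro i
      apply Continuous.intervalIntegrable
      apply continuous_finset_sum
      intro j _
      fun_prop
    rw [intervalIntegral.integral_finset_sum (fun i (_ : i ∈ Finset.univ) => hcont2 i)]
    refine Finset.sum_congr rfl fun i _ => ?_
    rw [intervalIntegral.integral_finset_sum (fun j (_ : j ∈ Finset.univ) => hcont i j)]
    exact Finset.sum_congr rfl fun j _ => hTint i j
  have hpos : 0 ≤ ∫ t in (0:ℝ)..1, ∑ i, ∑ j, q i * q j * rexp (-(t * dist (y i) (y j))) :=
    intervalIntegral.integral_nonneg zero_le_one (fun t ht => expdist_form_nonneg y q ht.1)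
  have hsplit : ∑ i, ∑ j, T i j
      = (∑ i, ∑ j, (if i = j then 0 else
          q i * q j * (1 - Real.exp (-dist (y i) (y j))) / dist (y i) (y j)))
        + ∑ i, q i ^ 2 := by
    rw [← Finset.sum_add_distrib]
    refine Finset.sum_congr rfl fun i _ => ?_
    have hsingle : q i ^ 2 = ∑ j, if i = j then q i ^ 2 else 0 := by
      rw [Finset.sum_ite_eq]
      simp
    rw [hsingle, ← Finset.sum_add_distrib]
    refine Finset.sum_congr rfl fun j _ => ?_
    by_cases h : i = j <;> simp [hT, h]
  linarith [hpos, hsum.symm.trans hsplit]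
end
end

section
/- There exists a universal constant C > 0 with the following property. For all points R, R', X, X' ∈ ℝ³ with R ≠ R', |R − X| ≤ (1/4)·min(|R − R'|, 1) and |R' − X'| ≤ (1/4)·min(|R − R'|, 1), one has | 1/|R − R'| + 1/|X − X'| − 1/|X − R'| − 1/|X' − R| | ≤ C / ( |R − R'| · (1 + |R − R'|²) ). In other words, the interaction of two neutral dipoles, each consisting of a positive point charge and a nearby negative point charge, decays like the inverse cube of the distance between the dipoles at large separation, and is at most C/|R − R'| at small separation. -/
set_option maxHeartbeats 1000000 in
lemma key_real (d e e' b a' b' N1 N2 : ℝ)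
    (hd : 0 < d) (he0 : 0 ≤ e) (he'0 : 0 ≤ e')
    (he : e ≤ d/4) (he' : e' ≤ d/4)
    (hb1 : d - e ≤ b) (hb2 : b ≤ d + e)
    (ha1 : d - e' ≤ a') (ha2 : a' ≤ d + e')
    (hb'1 : d - e - e' ≤ b')
    (hda : |d - a'| ≤ e') (hbb : |b - b'| ≤ e')
    (hN1 : |N1| ≤ 2*d*e + e^2)
    (hN12 : |N1 - N2| ≤ 2*(e*e')) :
    |N1/(d*b*(d+b)) - N2/(a'*b'*(a'+b'))| ≤ 40 * (e*e') / d^3 := by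
  have hbpos : 0 < b := by linarith
  have ha'pos : 0 < a' := by linarith
  have hb'pos : 0 < b' := by linarith
  have hb5 : b ≤ 5*d/4 := by linarith
  have ha5 : a' ≤ 5*d/4 := by linarith
  have hbb' := abs_le.mp hbb
  have hda' := abs_le.mp hda
  have hb'5 : b' ≤ 3*d/2 := by linarith [hbb'.1]
  set D1 := d*b*(d+b) with hD1def
  set D2 := a'*b'*(a'+b') with hD2def
  have hD1pos : 0 < D1 := mul_pos (mul_pos hd hbpos) (by linarith)
  have hD2pos : 0 < D2 := mul_pos (mul_pos ha'pos hb'pos) (by linarith)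
  have hd3 : (0:ℝ) < d^3 := pow_pos hd 3
  have hD1low : 21/16*d^3 ≤ D1 := by
    have A1 : 0 ≤ (b - 3*d/4)*(d*(d+b)) :=
      mul_nonneg (by linarith) (mul_nonneg hd.le (by linarith))
    have C1 : 0 ≤ (d*d)*(b - 3*d/4) :=
      mul_nonneg (mul_nonneg hd.le hd.le) (by linarith)
    rw [hD1def]; nlinarith [A1, C1]
  have hD2low : 15/32*d^3 ≤ D2 := by
    have A : 0 ≤ (a' - 3*d/4) * (b' * (a'+b')) :=
      mul_nonneg (by linarith) (mul_nonneg hb'pos.le (by linarith))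
    have B : 0 ≤ d * ((b' - d/2) * (a'+b')) :=
      mul_nonneg hd.le (mul_nonneg (by linarith) (by linarith))
    have C : 0 ≤ (d*d) * (a' + b' - 5*d/4) :=
      mul_nonneg (mul_nonneg hd.le hd.le) (by linarith)
    rw [hD2def]; nlinarith [A, B, C]
  have hDdiff : |D1 - D2| ≤ 75/8 * e' * d^2 := by
    have hid : D1 - D2 = (d - a')*(b*(d+b)) + (b - b')*(a'*(d+b))
        + ((d - a') + (b - b'))*(a'*b') := by rw [hD1def, hD2def]; ring
    have p1 : |(d - a')*(b*(d+b))| ≤ e' * (45/16*d^2) := by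
      rw [abs_mul]
      apply mul_le_mul hda ?_ (abs_nonneg _) he'0
      rw [abs_of_nonneg (mul_nonneg hbpos.le (by linarith))]
      nlinarith [mul_nonneg hd.le hd.le]
    have p2 : |(b - b')*(a'*(d+b))| ≤ e' * (45/16*d^2) := by
      rw [abs_mul]
      apply mul_le_mul hbb ?_ (abs_nonneg _) he'0
      rw [abs_of_nonneg (mul_nonneg ha'pos.le (by linarith))]
      nlinarith [mul_nonneg hd.le hd.le]
    have p3 : |((d - a') + (b - b'))*(a'*b')| ≤ (2*e') * (15/8*d^2) := by
      rw [abs_mul]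
      apply mul_le_mul ?_ ?_ (abs_nonneg _) (by linarith)
      · calc |(d - a') + (b - b')| ≤ |d - a'| + |b - b'| := abs_add_le _ _
          _ ≤ 2*e' := by linarith
      · rw [abs_of_nonneg (mul_nonneg ha'pos.le hb'pos.le)]
        nlinarith [mul_nonneg hd.le hd.le]
    calc |D1 - D2| ≤ |(d - a')*(b*(d+b))| + |(b - b')*(a'*(d+b))|
        + |((d - a') + (b - b'))*(a'*b')| := by rw [hid]; exact abs_add_three _ _ _
      _ ≤ e' * (45/16*d^2) + e' * (45/16*d^2) + (2*e') * (15/8*d^2) := by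
          linarith [p1, p2, p3]
      _ = 75/8 * e' * d^2 := by ring
  have hsplit : N1/D1 - N2/D2 = N1*(D2 - D1)/(D1*D2) + (N1 - N2)/D2 := by
    field_simp
    ring
  rw [hsplit]
  have hee' : 0 ≤ e * e' := mul_nonneg he0 he'0
  have term1 : |N1*(D2 - D1)/(D1*D2)| ≤ 35 * (e*e') / d^3 := by
    rw [abs_div, abs_mul, abs_of_pos (mul_pos hD1pos hD2pos)]
    have t1 : |N1| * |D2 - D1| ≤ (9/4*(d*e)) * (75/8*e'*d^2) := by
      apply mul_le_mul ?_ ?_ (abs_nonneg _) (by positivity)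
      · have : e^2 ≤ d*e/4 := by nlinarith
        linarith
      · rw [abs_sub_comm]; exact hDdiff
    have t1d : (21/16*d^3)*(15/32*d^3) ≤ D1*D2 :=
      mul_le_mul hD1low hD2low (by positivity) hD1pos.le
    calc |N1| * |D2 - D1| / (D1*D2)
        ≤ ((9/4*(d*e)) * (75/8*e'*d^2)) / ((21/16*d^3)*(15/32*d^3)) := by
          apply div_le_div₀ (by positivity) t1 (by positivity) t1d
      _ ≤ 35 * (e*e') / d^3 := by
          rw [div_le_div_iff₀ (by positivity) hd3]
          nlinarith [mul_nonneg hee' (pow_pos hd 6).le]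
  have term2 : |(N1 - N2)/D2| ≤ 5 * (e*e') / d^3 := by
    rw [abs_div, abs_of_pos hD2pos]
    calc |N1 - N2| / D2 ≤ (2*(e*e')) / (15/32*d^3) := by
          apply div_le_div₀ (by positivity) hN12 (by positivity) hD2low
      _ ≤ 5 * (e*e') / d^3 := by
          rw [div_le_div_iff₀ (by positivity) hd3]
          nlinarith [mul_nonneg hee' hd3.le]
  calc |N1*(D2 - D1)/(D1*D2) + (N1 - N2)/D2|
      ≤ |N1*(D2 - D1)/(D1*D2)| + |(N1 - N2)/D2| := abs_add_le _ _
    _ ≤ 35 * (e*e') / d^3 + 5 * (e*e') / d^3 := by linarith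
    _ = 40 * (e*e') / d^3 := by ring

set_option maxHeartbeats 1000000 in
lemma key_vec (u x x' : EuclideanSpace ℝ (Fin 3)) (hd : 0 < ‖u‖) (hx : ‖x‖ ≤ ‖u‖/4) (hx' : ‖x'‖ ≤ ‖u‖/4) :
    |1/‖u‖ + 1/‖u + x - x'‖ - 1/‖u + x‖ - 1/‖u - x'‖|
      ≤ 40 * (‖x‖ * ‖x'‖) / ‖u‖^3 := by
  set d := ‖u‖
  set e := ‖x‖
  set e' := ‖x'‖
  set b := ‖u + x‖ with hbdef
  set a' := ‖u - x'‖ with ha'def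
  set b' := ‖u + x - x'‖ with hb'def
  have he0 : 0 ≤ e := norm_nonneg _
  have he'0 : 0 ≤ e' := norm_nonneg _
  have hb1 : d - e ≤ b := by
    have h := norm_sub_le (u + x) x
    have h2 : (u + x) - x = u := by abel
    rw [h2] at h; linarith
  have hb2 : b ≤ d + e := norm_add_le u x
  have ha1 : d - e' ≤ a' := by
    have h := norm_add_le (u - x') x'
    have h2 : (u - x') + x' = u := by abel
    rw [h2] at h; linarith
  have ha2 : a' ≤ d + e' := norm_sub_le u x'
  have hb'1 : d - e - e' ≤ b' := by
    have h := norm_add_le ((u + x - x') + x') (-x)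
    have h2 : ((u + x - x') + x') + -x = u := by abel
    rw [h2] at h
    have h3 := norm_add_le (u + x - x') x'
    simp only [norm_neg] at h
    linarith
  have hda : |d - a'| ≤ e' := by
    have h := abs_norm_sub_norm_le u (u - x')
    have h2 : u - (u - x') = x' := by abel
    rw [h2] at h; exact h
  have hbb : |b - b'| ≤ e' := by
    have h := abs_norm_sub_norm_le (u + x) (u + x - x')
    have h2 : (u + x) - (u + x - x') = x' := by abel
    rw [h2] at h; exact h
  have hbpos : 0 < b := by linarith
  have ha'pos : 0 < a' := by linarith
  have hb'pos : 0 < b' := by linarith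
  set N1 : ℝ := b^2 - d^2 with hN1def
  set N2 : ℝ := b'^2 - a'^2 with hN2def
  have hN1val : N1 = 2 * (inner ℝ u x) + e^2 := by
    rw [hN1def, hbdef]
    have := norm_add_sq_real u x
    simp only [d, e] at *
    linarith
  have hN2val : N2 = 2 * (inner ℝ (u - x') x) + e^2 := by
    rw [hN2def, hb'def, ha'def]
    have h2 : u + x - x' = (u - x') + x := by abel
    rw [h2]
    have := norm_add_sq_real (u - x') x
    linarith
  have hN1 : |N1| ≤ 2*d*e + e^2 := by
    rw [hN1val]
    calc |2 * (inner ℝ u x) + e^2| ≤ |2 * (inner ℝ u x)| + |e^2| := abs_add_le _ _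
      _ ≤ 2*d*e + e^2 := by
          rw [abs_mul, abs_of_nonneg (by positivity : (0:ℝ) ≤ e^2)]
          have := abs_real_inner_le_norm u x
          simp only [abs_two]
          nlinarith [abs_nonneg (inner ℝ u x)]
  have hN12 : |N1 - N2| ≤ 2*(e*e') := by
    have hid : N1 - N2 = 2 * (inner ℝ x' x) := by
      rw [hN1val, hN2val, inner_sub_left]; ring
    rw [hid, abs_mul, abs_two]
    have := abs_real_inner_le_norm x' x
    nlinarith [abs_nonneg (inner ℝ x' x)]
  have hrw : 1/d + 1/b' - 1/b - 1/a'
      = N1/(d*b*(d+b)) - N2/(a'*b'*(a'+b')) := by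
    rw [hN1def, hN2def]
    field_simp
    ring
  rw [hrw]
  exact key_real d e e' b a' b' N1 N2 hd he0 he'0 hx hx' hb1 hb2 ha1 ha2 hb'1 hda hbb hN1 hN12


noncomputable section

set_option maxHeartbeats 1000000 in
/-- There is a universal constant `C > 0` such that for all
`R, R', X, X' ∈ ℝ³` with `R ≠ R'`, `|R − X| ≤ (1/4)·min(|R − R'|, 1)` and
`|R' − X'| ≤ (1/4)·min(|R − R'|, 1)`, the dipole-dipole interaction satisfies
`|1/|R − R'| + 1/|X − X'| − 1/|X − R'| − 1/|X' − R|| ≤ C/(|R − R'|·(1 + |R − R'|²))`. -/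
theorem dipole_dipole_interaction_bound :
    ∃ C : ℝ, 0 < C ∧ ∀ R R' X X' : E3, R ≠ R' →
      dist R X ≤ min (dist R R') 1 / 4 →
      dist R' X' ≤ min (dist R R') 1 / 4 →
      |1 / dist R R' + 1 / dist X X' - 1 / dist X R' - 1 / dist X' R|
        ≤ C / (dist R R' * (1 + dist R R' ^ 2)) := by
  refine ⟨5, by norm_num, fun R R' X X' hne hX hX' => ?_⟩
  have hd : 0 < dist R R' := dist_pos.mpr hne
  set u : E3 := R - R' with hu
  set x : E3 := X - R with hx
  set x' : E3 := X' - R' with hx'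
  have h1 : dist R R' = ‖u‖ := dist_eq_norm R R'
  have h2 : dist X X' = ‖u + x - x'‖ := by
    rw [dist_eq_norm]; congr 1; rw [hu, hx, hx']; abel
  have h3 : dist X R' = ‖u + x‖ := by
    rw [dist_eq_norm]; congr 1; rw [hu, hx]; abel
  have h4 : dist X' R = ‖u - x'‖ := by
    rw [dist_comm, dist_eq_norm]; congr 1; rw [hu, hx']; abel
  have h5 : dist R X = ‖x‖ := by rw [dist_comm, dist_eq_norm]
  have h6 : dist R' X' = ‖x'‖ := by rw [dist_comm, dist_eq_norm]
  set d := dist R R' with hddef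
  set m := min d 1 with hm
  have hm0 : 0 < m := lt_min hd one_pos
  have hmd : m ≤ d := min_le_left _ _
  have hm1 : m ≤ 1 := min_le_right _ _
  have hxe : ‖x‖ ≤ m / 4 := by rw [← h5]; exact hX
  have hx'e : ‖x'‖ ≤ m / 4 := by rw [← h6]; exact hX'
  have hdu : d = ‖u‖ := h1
  have hkey := key_vec u x x' (hdu ▸ hd) (by rw [← hdu]; linarith) (by rw [← hdu]; linarith)
  rw [h2, h3, h4, hdu]
  refine hkey.trans ?_
  rw [← hdu]
  have hee : ‖x‖ * ‖x'‖ ≤ m^2/16 := by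
    nlinarith [norm_nonneg x, norm_nonneg x']
  have hmm : m^2 * (1 + d^2) ≤ 2*d^2 := by
    rcases le_total d 1 with h | h
    · rw [hm, min_eq_left h]; nlinarith [mul_nonneg (mul_nonneg (sub_nonneg.mpr h) (by linarith : (0:ℝ) ≤ 1 + d)) (sq_nonneg d)]
    · rw [hm, min_eq_right h]; nlinarith
  rw [div_le_div_iff₀ (by positivity) (by positivity)]
  nlinarith [mul_le_mul_of_nonneg_right hee (by positivity : (0:ℝ) ≤ d*(1+d^2)),
    mul_le_mul_of_nonneg_left hmm hd.le]
end
end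

section
/- There exists a universal constant C > 0 such that for every finite set J ⊆ ℤ³ with #J ≥ 2 and every family of nonnegative real numbers (a_j)_{j ∈ J}, one has Σ_{j, k ∈ J, j ≠ k} a_j a_k / (1 + |j − k|³) ≤ C · log(1 + #J) · Σ_{j ∈ J} a_j². -/
noncomputable section

lemma abs_coord_le (x : E3) (i : Fin 3) : |x i| ≤ ‖x‖ := by
  rw [EuclideanSpace.norm_eq, ← Real.sqrt_sq_eq_abs]
  apply Real.sqrt_le_sqrt
  have : x i ^ 2 ≤ ∑ j : Fin 3, ‖x j‖ ^ 2 := by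
    have := Finset.single_le_sum (f := fun j => ‖x j‖^2) (fun j _ => by positivity)
      (Finset.mem_univ i)
    simpa [sq_abs] using this
  simpa using this

/-- counting lattice points in a ball -/

lemma count_ball (j : Fin 3 → ℤ) (S : Finset (Fin 3 → ℤ)) (D : ℝ) (hD : 0 ≤ D) :
    ((S.filter (fun k => ‖latt j - latt k‖ ≤ D)).card : ℝ) ≤ 27 * (1 + D ^ 3) := by
  set m : ℤ := ⌊D⌋ with hm
  have hm0 : 0 ≤ m := Int.le_floor.2 (by simpa using hD)
  have hsub : S.filter (fun k => ‖latt j - latt k‖ ≤ D) ⊆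
      Finset.Icc (fun i => j i - m) (fun i => j i + m) := by
    intro k hk
    rw [Finset.mem_filter] at hk
    rw [Finset.mem_Icc, Pi.le_def, Pi.le_def]
    constructor <;> intro i <;>
    · have h1 : |((j i : ℝ) - (k i : ℝ))| ≤ D := by
        have := abs_coord_le (latt j - latt k) i
        simpa [latt] using this.trans hk.2
      have h2 : |(j i - k i : ℤ)| ≤ m := by
        rw [hm, Int.le_floor]
        push_cast
        simpa using h1
      have := abs_le.1 h2
      omega
  have hcard := Finset.card_le_card hsub
  have hIcc : (Finset.Icc (fun i => j i - m) (fun i => j i + m)).card = (2*m+1).toNat ^ 3 := by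
    rw [Pi.card_Icc]
    have he : ∀ i : Fin 3, (Finset.Icc (j i - m) (j i + m)).card = (2*m+1).toNat := by
      intro i; rw [Int.card_Icc]; congr 1; ring
    simp [he, Finset.prod_const]
  have key : ((2*m+1).toNat : ℝ) ^ 3 ≤ 27 * (1 + D ^ 3) := by
    have h1 : ((2*m+1).toNat : ℝ) = 2*(m:ℝ)+1 := by
      have : ((2*m+1).toNat : ℤ) = 2*m+1 := Int.toNat_of_nonneg (by omega)
      exact_mod_cast congrArg (Int.cast : ℤ → ℝ) this
    rw [h1]
    have hmD : (m : ℝ) ≤ D := Int.floor_le D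
    have hm0' : (0:ℝ) ≤ (m:ℝ) := by exact_mod_cast hm0
    have hx : (2*(m:ℝ)+1) ^ 3 ≤ (2*D+1) ^ 3 := by
      apply pow_le_pow_left₀ (by linarith) (by linarith)
    have hy : (2*D+1) ^ 3 ≤ 27 * (1 + D ^ 3) := by
      nlinarith [mul_nonneg hD (sq_nonneg (D-1)), sq_nonneg (D-1), sq_nonneg D, hD]
    linarith
  have h2 : (S.filter (fun k => ‖latt j - latt k‖ ≤ D)).card ≤ (2*m+1).toNat ^ 3 :=
    hIcc ▸ hcard
  calc ((S.filter (fun k => ‖latt j - latt k‖ ≤ D)).card : ℝ)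
      ≤ (((2*m+1).toNat ^ 3 : ℕ) : ℝ) := by exact_mod_cast h2
    _ ≤ 27 * (1 + D ^ 3) := by push_cast; exact key

lemma harmonic_le : ∀ n : ℕ, ∑ t ∈ Finset.Icc 1 n, (1 : ℝ) / t ≤ 1 + Real.log n := by
  intro n
  induction n with
  | zero => simp
  | succ n ih =>
    rw [Finset.sum_Icc_succ_top (by omega)]
    by_cases h : 1 ≤ n
    · have hnpos : (0:ℝ) < n := by exact_mod_cast h
      have h1 := Real.log_le_sub_one_of_pos (show (0:ℝ) < (n:ℝ)/((n:ℝ)+1) by positivity)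
      rw [Real.log_div (ne_of_gt hnpos) (by positivity)] at h1
      have hq : (n:ℝ)/((n:ℝ)+1) - 1 = -(1/((n:ℝ)+1)) := by field_simp; ring
      push_cast
      push_cast at ih
      linarith
    · interval_cases n
      norm_num

lemma sum_inv_dist_le (j : Fin 3 → ℤ) (S : Finset (Fin 3 → ℤ)) :
    ∑ k ∈ S, 1 / (1 + ‖latt j - latt k‖ ^ 3) ≤
      27 * ∑ t ∈ Finset.Icc 1 S.card, (1 : ℝ) / t := by
  classical
  set d : (Fin 3 → ℤ) → ℝ := fun k => ‖latt j - latt k‖ with hd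
  set key : (Fin 3 → ℤ) → ℝ ×ₗ ℕ := fun k => toLex (d k, Encodable.encode k) with hkey
  have keyinj : Function.Injective key := by
    intro x y hxy
    have h : (d x, Encodable.encode x) = (d y, Encodable.encode y) := by
      simpa [hkey] using hxy
    exact Encodable.encode_injective (congrArg Prod.snd h)
  set N : (Fin 3 → ℤ) → ℕ := fun k => (S.filter (fun k' => key k' ≤ key k)).card with hN
  have hN1 : ∀ k ∈ S, 1 ≤ N k := fun k hk =>
    Finset.card_pos.2 ⟨k, Finset.mem_filter.2 ⟨hk, le_refl _⟩⟩
  have hNcard : ∀ k, N k ≤ S.card := fun k =>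
    Finset.card_le_card (Finset.filter_subset _ _)
  have hNle : ∀ k ∈ S, (N k : ℝ) ≤ 27 * (1 + d k ^ 3) := by
    intro k hk
    have hsub : S.filter (fun k' => key k' ≤ key k) ⊆ S.filter (fun k' => d k' ≤ d k) := by
      apply Finset.monotone_filter_right
      intro k' _ hk'
      simp only [hkey] at hk'
      rcases Prod.Lex.le_iff.1 hk' with h | h
      · exact le_of_lt h
      · exact le_of_eq h.1
    calc (N k : ℝ) ≤ ((S.filter (fun k' => d k' ≤ d k)).card : ℝ) := by
          exact_mod_cast Finset.card_le_card hsub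
      _ ≤ 27 * (1 + d k ^ 3) := count_ball j S (d k) (norm_nonneg _)
  have mono : ∀ x ∈ S, ∀ y ∈ S, key x < key y → N x < N y := by
    intro x hx y hy hlt
    apply Finset.card_lt_card
    rw [Finset.ssubset_iff_of_subset]
    · exact ⟨y, Finset.mem_filter.2 ⟨hy, le_refl _⟩,
        fun hc => absurd ((Finset.mem_filter.1 hc).2) (not_le.2 hlt)⟩
    · intro z hz
      rw [Finset.mem_filter] at hz ⊢
      exact ⟨hz.1, hz.2.trans hlt.le⟩
  have hNinj : ∀ x ∈ S, ∀ y ∈ S, N x = N y → x = y := by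
    intro x hx y hy hxy
    by_contra hne
    have hk : key x ≠ key y := fun h => hne (keyinj h)
    rcases lt_or_gt_of_ne hk with h | h
    · exact absurd hxy (ne_of_lt (mono x hx y hy h))
    · exact absurd hxy.symm (ne_of_lt (mono y hy x hx h))
  have hstep : ∑ k ∈ S, 1 / (1 + d k ^ 3) ≤ ∑ k ∈ S, 27 * ((1:ℝ) / (N k)) := by
    apply Finset.sum_le_sum
    intro k hk
    have h1 : (0:ℝ) < N k := by exact_mod_cast hN1 k hk
    have h2 : (0:ℝ) < 1 + d k ^ 3 := by positivity
    rw [mul_one_div, div_le_div_iff₀ h2 h1, one_mul]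
    linarith [hNle k hk]
  have himg : ∑ k ∈ S, 27 * ((1:ℝ) / (N k)) = 27 * ∑ t ∈ S.image N, (1:ℝ) / t := by
    rw [← Finset.mul_sum, Finset.sum_image hNinj]
  have hsub2 : S.image N ⊆ Finset.Icc 1 S.card := by
    intro t ht
    rcases Finset.mem_image.1 ht with ⟨k, hk, rfl⟩
    exact Finset.mem_Icc.2 ⟨hN1 k hk, hNcard k⟩
  calc ∑ k ∈ S, 1 / (1 + d k ^ 3) ≤ ∑ k ∈ S, 27 * ((1:ℝ) / (N k)) := hstep
    _ = 27 * ∑ t ∈ S.image N, (1:ℝ) / t := himg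
    _ ≤ 27 * ∑ t ∈ Finset.Icc 1 S.card, (1:ℝ) / t := by
        apply mul_le_mul_of_nonneg_left _ (by norm_num)
        apply Finset.sum_le_sum_of_subset_of_nonneg hsub2
        intro t _ _
        positivity

/-- There is a universal constant `C > 0` such that for every finite
`J ⊆ ℤ³` with `#J ≥ 2` and all nonnegative `(a_j)_{j ∈ J}`,
`Σ_{j ≠ k ∈ J} a_j a_k/(1 + |j − k|³) ≤ C·log(1 + #J)·Σ_{j ∈ J} a_j²`. -/
theorem lattice_interaction_log_bound :
    ∃ C : ℝ, 0 < C ∧ ∀ J : Finset (Fin 3 → ℤ), 2 ≤ J.card →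
      ∀ a : (Fin 3 → ℤ) → ℝ, (∀ j, 0 ≤ a j) →
      ∑ j ∈ J, ∑ k ∈ J, (if j = k then 0 else a j * a k / (1 + ‖latt j - latt k‖ ^ 3))
        ≤ C * Real.log (1 + (J.card : ℝ)) * ∑ j ∈ J, a j ^ 2 := by
  classical
  refine ⟨54, by norm_num, ?_⟩
  intro J hJ a ha
  set n := J.card with hn
  have hn2 : (2:ℝ) ≤ (n:ℝ) := by exact_mod_cast hJ
  have hlog1 : 1 ≤ Real.log (1 + (n:ℝ)) := by
    rw [Real.le_log_iff_exp_le (by linarith)]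
    have := Real.exp_one_lt_d9
    linarith
  -- bound on the inner sum over the erased set
  have hinner : ∀ j ∈ J, ∑ k ∈ J.erase j, 1 / (1 + ‖latt j - latt k‖ ^ 3)
      ≤ 54 * Real.log (1 + (n:ℝ)) := by
    intro j hj
    have h1 := sum_inv_dist_le j (J.erase j)
    have hcard : (J.erase j).card = n - 1 := by
      rw [Finset.card_erase_of_mem hj]
    have h2 := harmonic_le (J.erase j).card
    have h1' : (1:ℕ) ≤ (J.erase j).card := by omega
    have hx : (0:ℝ) < ((J.erase j).card : ℝ) := by exact_mod_cast h1'
    have hc : ((J.erase j).card : ℝ) ≤ 1 + (n:ℝ) := by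
      have h3 : (J.erase j).card ≤ n := by omega
      have := (Nat.cast_le (α := ℝ)).2 h3
      linarith
    have hlog2 : Real.log ((J.erase j).card : ℝ) ≤ Real.log (1 + (n:ℝ)) :=
      Real.log_le_log hx hc
    linarith
  -- termwise AM-GM bound
  set T1 := ∑ j ∈ J, ∑ k ∈ J,
    (if j = k then 0 else a j ^ 2 * (1 / (1 + ‖latt j - latt k‖ ^ 3))) with hT1def
  set T2 := ∑ j ∈ J, ∑ k ∈ J,
    (if j = k then 0 else a k ^ 2 * (1 / (1 + ‖latt j - latt k‖ ^ 3))) with hT2def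
  have key1 : ∀ j k : Fin 3 → ℤ,
      (if j = k then 0 else a j * a k / (1 + ‖latt j - latt k‖ ^ 3)) ≤
      ((if j = k then 0 else a j ^ 2 * (1 / (1 + ‖latt j - latt k‖ ^ 3)))
        + (if j = k then 0 else a k ^ 2 * (1 / (1 + ‖latt j - latt k‖ ^ 3)))) / 2 := by
    intro j k
    by_cases h : j = k
    · simp [h]
    · simp only [h, if_false]
      have hpos : (0:ℝ) < 1 + ‖latt j - latt k‖ ^ 3 := by positivity
      have h1 : (0:ℝ) ≤ 1 / (1 + ‖latt j - latt k‖ ^ 3) := by positivity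
      have h2 : a j * a k ≤ (a j ^ 2 + a k ^ 2) / 2 := by nlinarith [sq_nonneg (a j - a k)]
      have h3 := mul_le_mul_of_nonneg_right h2 h1
      calc a j * a k / (1 + ‖latt j - latt k‖ ^ 3)
          = a j * a k * (1 / (1 + ‖latt j - latt k‖ ^ 3)) := by ring
        _ ≤ (a j ^ 2 + a k ^ 2) / 2 * (1 / (1 + ‖latt j - latt k‖ ^ 3)) := h3
        _ = (a j ^ 2 * (1 / (1 + ‖latt j - latt k‖ ^ 3))
            + a k ^ 2 * (1 / (1 + ‖latt j - latt k‖ ^ 3))) / 2 := by ring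
  have step1 : ∑ j ∈ J, ∑ k ∈ J,
      (if j = k then 0 else a j * a k / (1 + ‖latt j - latt k‖ ^ 3)) ≤ (T1 + T2) / 2 := by
    have h := Finset.sum_le_sum (fun j (_ : j ∈ J) =>
      Finset.sum_le_sum (fun k (_ : k ∈ J) => key1 j k))
    refine h.trans_eq ?_
    rw [hT1def, hT2def, ← Finset.sum_add_distrib, Finset.sum_div]
    refine Finset.sum_congr rfl fun j _ => ?_
    rw [← Finset.sum_add_distrib, Finset.sum_div]
  have hT : T2 = T1 := by
    rw [hT2def, Finset.sum_comm, hT1def]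
    refine Finset.sum_congr rfl fun x _ => Finset.sum_congr rfl fun y _ => ?_
    by_cases h : x = y
    · simp [h]
    · simp [h, Ne.symm h, norm_sub_rev]
  have hT1 : T1 = ∑ j ∈ J, a j ^ 2 * ∑ k ∈ J.erase j, 1 / (1 + ‖latt j - latt k‖ ^ 3) := by
    rw [hT1def]
    refine Finset.sum_congr rfl fun j hj => ?_
    rw [← Finset.sum_erase (a := j) J (f := fun k =>
      if j = k then 0 else a j ^ 2 * (1 / (1 + ‖latt j - latt k‖ ^ 3))) (by simp)]
    rw [Finset.mul_sum]
    refine Finset.sum_congr rfl fun k hk => ?_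
    have hne : j ≠ k := fun h => (Finset.mem_erase.1 hk).1 h.symm
    simp [hne]
  have hT1le : T1 ≤ 54 * Real.log (1 + (n:ℝ)) * ∑ j ∈ J, a j ^ 2 := by
    rw [hT1, Finset.mul_sum]
    refine Finset.sum_le_sum fun j hj => ?_
    rw [mul_comm (54 * Real.log (1 + (n:ℝ)))]
    exact mul_le_mul_of_nonneg_left (hinner j hj) (sq_nonneg _)
  calc ∑ j ∈ J, ∑ k ∈ J, (if j = k then 0 else a j * a k / (1 + ‖latt j - latt k‖ ^ 3))
      ≤ (T1 + T2) / 2 := step1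
    _ = T1 := by rw [hT]; ring
    _ ≤ 54 * Real.log (1 + (n:ℝ)) * ∑ j ∈ J, a j ^ 2 := hT1le
end
end
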